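/- arXiv:1501.07108 — 4 statements merged into one kernel-verified Lean document; each statement's English description precedes it below -/
import Mathlib

section
/- Every word-representable graph on n ≥ 3 vertices is 2(n−2)-word-representable. -/
variable {V : Type*}

/-- Letters `x` and `y` alternate in the word `W`: the subword induced by the two
letters has no two equal consecutive letters. -/
def Alternate [DecidableEq V] (W : List V) (x y : V) : Prop :=
  (W.filter (fun z => z = x ∨ z = y)).Chain' (· ≠ ·)

/-- A word is `k`-uniform if every letter of the alphabet occurs exactly `k` times. -/
def Uniform [DecidableEq V] (W : List V) (k : ℕ) : Prop :=
  ∀ x : V, W.count x = k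

/-- A word `W` represents the graph `G`: every vertex occurs in `W` and two distinct
vertices are adjacent iff they alternate in `W`. -/
def Represents [DecidableEq V] (W : List V) (G : SimpleGraph V) : Prop :=
  (∀ x : V, x ∈ W) ∧ ∀ x y : V, x ≠ y → (G.Adj x y ↔ Alternate W x y)

def WordRepresentable [DecidableEq V] (G : SimpleGraph V) : Prop :=
  ∃ W : List V, Represents W G

def KWordRepresentable [DecidableEq V] (G : SimpleGraph V) (k : ℕ) : Prop :=
  ∃ W : List V, Uniform W k ∧ Represents W G

/-- A digraph (relation) is acyclic if it has no directed cycle. -/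
def Acyclic (E : V → V → Prop) : Prop :=
  ∀ x : V, ¬ Relation.TransGen E x x

/-- A digraph is semi-transitive if it is acyclic and for every directed path
`v 0 → v 1 → ⋯ → v k` such that the arc `v 0 → v k` is present, all arcs
`v i → v j` for `i < j` are present. -/
def SemiTransitive (E : V → V → Prop) : Prop :=
  Acyclic E ∧ ∀ (k : ℕ) (v : Fin (k + 1) → V),
    (∀ i : Fin k, E (v i.castSucc) (v i.succ)) →
    E (v 0) (v (Fin.last k)) →
    ∀ i j : Fin (k + 1), i < j → E (v i) (v j)

/-- `E` is an orientation of the graph `G`. -/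
def IsOrientation (G : SimpleGraph V) (E : V → V → Prop) : Prop :=
  ∀ x y : V, G.Adj x y ↔ (E x y ∨ E y x)

/-- The word `W` covers the set `A` of non-edges of the digraph `E` orienting `G`:
`W` is `k`-uniform for some `k`; its initial permutation is a topological sort of `E`
(first occurrences respect reachability); `G` is a subgraph of the graph represented
by `W`; and every pair in `A` is a non-edge of the graph represented by `W`. -/
def Covers [DecidableEq V] (W : List V) (G : SimpleGraph V) (E : V → V → Prop)
    (A : Set (V × V)) : Prop :=
  (∃ k : ℕ, Uniform W k) ∧
  (∀ u v : V, Relation.TransGen E u v → W.idxOf u < W.idxOf v) ∧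
  (∀ x y : V, G.Adj x y → Alternate W x y) ∧
  ∀ p ∈ A, ¬ Alternate W p.1 p.2

/-- `G` is representable by a concatenation of `k` permutations of its vertex set. -/
def PermutationallyRepresentable [DecidableEq V] (G : SimpleGraph V) (k : ℕ) : Prop :=
  ∃ Ps : List (List V), Ps.length = k ∧
    (∀ P ∈ Ps, P.Nodup ∧ ∀ x : V, x ∈ P) ∧
    Represents Ps.flatten G

namespace Stmt5
variable [DecidableEq V]

/-- the boolean pair predicate matching `Alternate`'s filter -/
abbrev pairP (x y : V) : V → Bool := fun z => decide (z = x ∨ z = y)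

lemma alternate_def (W : List V) (x y : V) :
    Alternate W x y ↔ (W.filter (pairP x y)).Chain' (· ≠ ·) := Iff.rfl

lemma pairP_comm (x y : V) : pairP x y = pairP y x := by
  funext z; exact decide_eq_decide.mpr or_comm

/-- alternating word normal form -/
def altW (x y : V) : ℕ → List V
  | 0 => []
  | n+1 => x :: altW y x n

lemma altW_chain' {x y : V} (h : x ≠ y) : ∀ n, (altW x y n).Chain' (· ≠ ·) := by
  intro n
  induction n using Nat.strong_induction_on generalizing x y with
  | _ n ih =>
    match n with
    | 0 => simp [altW, List.Chain']
    | 1 => simp [altW, List.Chain']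
    | (m+2) =>
      show List.Chain' _ (x :: y :: altW x y m)
      refine List.isChain_cons_cons.mpr ⟨h, ?_⟩
      exact ih (m+1) (by omega) h.symm

lemma altW_count {x y : V} (h : x ≠ y) :
    ∀ n, (altW x y n).count x = (n+1)/2 ∧ (altW x y n).count y = n/2 := by
  intro n
  induction n using Nat.strong_induction_on generalizing x y with
  | _ n ih =>
    match n with
    | 0 => simp [altW]
    | (m+1) =>
      obtain ⟨c1, c2⟩ := ih m (by omega) h.symm
      constructor
      · show (x :: altW y x m).count x = (m+2)/2
        rw [List.count_cons_self, c2]; omega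
      · show (x :: altW y x m).count y = (m+1)/2
        rw [List.count_cons_of_ne h, c1]

lemma altW_take (x y : V) : ∀ n m, (altW x y n).take m = altW x y (min m n) := by
  intro n
  induction n generalizing x y with
  | zero => simp [altW]
  | succ n ih =>
    intro m
    match m with
    | 0 => simp [altW]
    | (m+1) =>
      have : min (m+1) (n+1) = (min m n) + 1 := by omega
      rw [this]
      show x :: (altW y x n).take m = x :: altW y x (min m n)
      rw [ih y x m]

lemma altW_mem {x y z : V} : ∀ n, z ∈ altW x y n → z = x ∨ z = y := by
  intro n
  induction n generalizing x y with
  | zero => simp [altW]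
  | succ n ih =>
    intro hz
    simp only [altW, List.mem_cons] at hz
    rcases hz with h | h
    · exact Or.inl h
    · exact (ih h).symm

/-- a two-letter alternating word is in normal form -/
lemma chain'_normal {x y : V} (hxy : x ≠ y) :
    ∀ g : List V, (∀ z ∈ g, z = x ∨ z = y) → g.Chain' (· ≠ ·) →
      g = altW x y g.length ∨ g = altW y x g.length := by
  intro g
  induction g with
  | nil => simp [altW]
  | cons a g ih =>
    intro hmem hch
    have hg := ih (fun z hz => hmem z (by simp [hz])) hch.tail
    have ha := hmem a (by simp)
    have hhead : ∀ w, g.head? = some w → a ≠ w := by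
      intro w hw
      exact (List.isChain_cons.mp hch).1 w hw
    rcases ha with ha | ha
    · subst ha
      left
      show a :: g = altW a y (g.length + 1)
      simp only [altW, List.cons.injEq, true_and]
      rcases hg with hg | hg
      · match hG : g.length, hg with
        | 0, hg => simp only [altW] at hg; simp [hg, altW]
        | (m+1), hg =>
          exfalso
          rw [hg] at hhead
          exact hhead a (by simp [altW]) rfl
      · exact hg
    · subst ha
      right
      show a :: g = altW a x (g.length + 1)
      simp only [altW, List.cons.injEq, true_and]
      rcases hg with hg | hg
      · exact hg
      · match hG : g.length, hg with
        | 0, hg => simp only [altW] at hg; simp [hg, altW]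
        | (m+1), hg =>
          exfalso
          rw [hg] at hhead
          exact hhead a (by simp [altW]) rfl

/-- balanced prefix-count condition on a list -/
def Bal (g : List V) (x y : V) : Prop :=
  ∀ m, (g.take m).count y ≤ (g.take m).count x ∧ (g.take m).count x ≤ (g.take m).count y + 1

lemma bal_altW {x y : V} (hxy : x ≠ y) (n : ℕ) : Bal (altW x y n) x y := by
  intro m
  rw [altW_take, (altW_count hxy _).1, (altW_count hxy _).2]
  omega

lemma chain'_of_bal {x y : V} (hxy : x ≠ y) (g : List V)
    (hmem : ∀ z ∈ g, z = x ∨ z = y) (h : Bal g x y ∨ Bal g y x) :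
    g.Chain' (· ≠ ·) := by
  rw [List.Chain', List.isChain_iff_getElem]
  intro i hi
  by_contra heq
  have hi1 : i < g.length := by omega
  have hi2 : i + 1 < g.length := by omega
  have heq' : g[i] = g[i+1] := heq
  have e1 : g.take (i+1) = g.take i ++ [g[i]] := by
    rw [List.take_succ, List.getElem?_eq_getElem hi1]; rfl
  have e2 : g.take (i+2) = g.take i ++ [g[i], g[i]] := by
    rw [show i+2 = (i+1)+1 from rfl, List.take_succ, List.getElem?_eq_getElem hi2, ← heq', e1]
    rw [List.append_assoc]
    rfl
  have hzmem : g[i] = x ∨ g[i] = y := hmem _ (List.getElem_mem hi1)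
  rcases hzmem with hzx | hzy
  · rw [hzx] at e2
    have hcx : (g.take (i+2)).count x = (g.take i).count x + 2 := by
      rw [e2]; simp [List.count_append]
    have hcy : (g.take (i+2)).count y = (g.take i).count y := by
      rw [e2]; simp [List.count_append, List.count_cons, hxy.symm, hxy]
    rcases h with hb | hb <;>
    · have h1 := hb i
      have h2 := hb (i+2)
      rw [hcx, hcy] at h2
      omega
  · rw [hzy] at e2
    have hcy : (g.take (i+2)).count y = (g.take i).count y + 2 := by
      rw [e2]; simp [List.count_append]
    have hcx : (g.take (i+2)).count x = (g.take i).count x := by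
      rw [e2]; simp [List.count_append, List.count_cons, hxy, hxy.symm]
    rcases h with hb | hb <;>
    · have h1 := hb i
      have h2 := hb (i+2)
      rw [hcx, hcy] at h2
      omega

lemma bal_of_chain' {x y : V} (hxy : x ≠ y) (g : List V)
    (hmem : ∀ z ∈ g, z = x ∨ z = y) (h : g.Chain' (· ≠ ·)) :
    Bal g x y ∨ Bal g y x := by
  rcases chain'_normal hxy g hmem h with hg | hg
  · left; rw [hg]; exact bal_altW hxy _
  · right; rw [hg]; exact bal_altW hxy.symm _


/-- prefixes of a filtered list are filters of prefixes -/
lemma exists_take_filter (p : V → Bool) : ∀ (l : List V) (m : ℕ),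
    ∃ n, (l.take n).filter p = (l.filter p).take m := by
  intro l
  induction l with
  | nil => intro m; exact ⟨0, by simp⟩
  | cons a l ih =>
    intro m
    by_cases hp : p a
    · match m with
      | 0 => exact ⟨0, by simp⟩
      | (m+1) =>
        obtain ⟨n, hn⟩ := ih m
        refine ⟨n+1, ?_⟩
        rw [List.take_succ_cons, List.filter_cons_of_pos hp,
          List.filter_cons_of_pos hp, List.take_succ_cons, hn]
    · obtain ⟨n, hn⟩ := ih m
      refine ⟨n+1, ?_⟩
      rw [List.take_succ_cons, List.filter_cons_of_neg (by simp [hp]),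
        List.filter_cons_of_neg (by simp [hp]), hn]

lemma count_single (a b : V) : List.count a [b] = if a = b then 1 else 0 := by
  by_cases h : a = b <;> simp [h, List.count_singleton, eq_comm (a := b)]

/-- prefix-count alternation condition on the whole word -/
def AltX (W : List V) (x y : V) : Prop :=
  ∀ n, (W.take n).count y ≤ (W.take n).count x ∧
    (W.take n).count x ≤ (W.take n).count y + 1

lemma altX_iff_bal {x y : V} (hxy : x ≠ y) (W : List V) :
    AltX W x y ↔ Bal (W.filter (pairP x y)) x y := by
  have hx : pairP x y x = true := by simp
  have hy : pairP x y y = true := by simp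
  constructor
  · intro h m
    obtain ⟨n, hn⟩ := exists_take_filter (pairP x y) W m
    rw [← hn, List.count_filter hy, List.count_filter hx]
    exact h n
  · intro h n
    have hpref : (W.take n).filter (pairP x y) <+: W.filter (pairP x y) :=
      List.IsPrefix.filter _ (List.take_prefix n W)
    have := List.prefix_iff_eq_take.mp hpref
    have h' := h ((W.take n).filter (pairP x y)).length
    rw [← this, List.count_filter hy, List.count_filter hx] at h'
    exact h'

lemma mem_filter_pair {x y z : V} {W : List V} (h : z ∈ W.filter (pairP x y)) :
    z = x ∨ z = y := by
  have := List.of_mem_filter h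
  simpa using this

/-- main characterization -/
lemma alternate_iff_altX {x y : V} (hxy : x ≠ y) (W : List V) :
    Alternate W x y ↔ AltX W x y ∨ AltX W y x := by
  rw [alternate_def]
  constructor
  · intro h
    rcases bal_of_chain' hxy (W.filter (pairP x y)) (fun z hz => mem_filter_pair hz) h with hb | hb
    · exact Or.inl ((altX_iff_bal hxy W).mpr hb)
    · right
      rw [altX_iff_bal hxy.symm W, ← pairP_comm]
      intro m
      exact ⟨(hb m).1, (hb m).2⟩
  · intro h
    apply chain'_of_bal hxy _ (fun z hz => mem_filter_pair hz)
    rcases h with h | h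
    · exact Or.inl ((altX_iff_bal hxy W).mp h)
    · right
      rw [altX_iff_bal hxy.symm W, ← pairP_comm] at h
      intro m
      exact ⟨(h m).1, (h m).2⟩

section PartA

variable {G : SimpleGraph V} {W : List V}

lemma not_altX_both {x y : V} (hxy : x ≠ y) (hx : x ∈ W)
    (h1 : AltX W x y) (h2 : AltX W y x) : False := by
  have hb1 := (altX_iff_bal hxy W).mp h1
  have hb2 : Bal (W.filter (pairP x y)) y x := by
    rw [altX_iff_bal hxy.symm W, ← pairP_comm] at h2; exact h2
  have hfx : x ∈ W.filter (pairP x y) := List.mem_filter.mpr ⟨hx, by simp⟩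
  obtain ⟨z, f', hF⟩ := List.exists_cons_of_ne_nil
    (show W.filter (pairP x y) ≠ [] from fun h => by simp [h] at hfx)
  have hz : z = x ∨ z = y := mem_filter_pair (W := W) (x := x) (y := y) (by rw [hF]; simp)
  have h1' := hb1 1
  have h2' := hb2 1
  rw [hF] at h1' h2'
  have ht1 : (z :: f').take 1 = [z] := rfl
  rw [ht1] at h1' h2'
  rw [count_single, count_single] at h1' h2'
  rcases hz with rfl | rfl
  · simp [hxy.symm] at h1' h2'
  · simp [hxy] at h1' h2'

lemma altX_strict {x y : V} (hxy : x ≠ y) (hx : x ∈ W) (h1 : AltX W x y) :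
    ∃ n, (W.take n).count y < (W.take n).count x := by
  have hb1 := (altX_iff_bal hxy W).mp h1
  have hfx : x ∈ W.filter (pairP x y) := List.mem_filter.mpr ⟨hx, by simp⟩
  obtain ⟨z, f', hF⟩ := List.exists_cons_of_ne_nil
    (show W.filter (pairP x y) ≠ [] from fun h => by simp [h] at hfx)
  have hz : z = x ∨ z = y := mem_filter_pair (W := W) (x := x) (y := y) (by rw [hF]; simp)
  obtain ⟨n, hn⟩ := exists_take_filter (pairP x y) W 1
  refine ⟨n, ?_⟩
  rw [show (W.take n).count y = ((W.take n).filter (pairP x y)).count y from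
    (List.count_filter (by simp)).symm,
    show (W.take n).count x = ((W.take n).filter (pairP x y)).count x from
    (List.count_filter (by simp)).symm, hn, hF]
  have ht1 : (z :: f').take 1 = [z] := rfl
  rw [ht1, count_single, count_single]
  have h1' := hb1 1
  rw [hF, ht1, count_single, count_single] at h1'
  rcases hz with rfl | rfl
  · simp [hxy.symm]
  · simp [hxy] at h1'

theorem exists_orientation (hW : Represents W G) : ∃ E : V → V → Prop,
    (∀ x y, E x y → G.Adj x y) ∧
    (∀ x y, G.Adj x y → E x y ∨ E y x) ∧
    (∀ x, ¬ Relation.TransGen E x x) ∧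
    (∀ x y w, E x y → Relation.TransGen E x w → Relation.TransGen E w y →
      G.Adj x w ∧ G.Adj w y) := by
  classical
  obtain ⟨hmem, hiff⟩ := hW
  set E : V → V → Prop := fun x y => G.Adj x y ∧ AltX W x y with hE
  have hstep : ∀ x y, E x y →
      (∀ n, (W.take n).count y ≤ (W.take n).count x) ∧
      ∃ n, (W.take n).count y < (W.take n).count x :=
    fun x y h => ⟨fun n => (h.2 n).1, altX_strict h.1.ne (hmem x) h.2⟩
  have hmono : ∀ x y, Relation.TransGen E x y →
      (∀ n, (W.take n).count y ≤ (W.take n).count x) ∧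
      ∃ n, (W.take n).count y < (W.take n).count x := by
    intro x y h
    induction h with
    | single h => exact hstep _ _ h
    | tail _ h2 ih =>
      obtain ⟨hd, n, hn⟩ := ih
      obtain ⟨hd2, _⟩ := hstep _ _ h2
      exact ⟨fun n => le_trans (hd2 n) (hd n), ⟨n, lt_of_le_of_lt (hd2 n) hn⟩⟩
  have hacyc : ∀ x, ¬ Relation.TransGen E x x := by
    intro x hx
    obtain ⟨_, n, hn⟩ := hmono x x hx
    omega
  refine ⟨E, fun x y h => h.1, ?_, hacyc, ?_⟩
  · intro x y h
    rcases (alternate_iff_altX h.ne W).mp ((hiff x y h.ne).mp h) with h' | h'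
    · exact Or.inl ⟨h, h'⟩
    · exact Or.inr ⟨h.symm, h'⟩
  · intro x y w hxy hxw hwy
    have hdxw := (hmono _ _ hxw).1
    have hdwy := (hmono _ _ hwy).1
    have hxwne : x ≠ w := fun h => hacyc x (h ▸ hxw)
    have hwyne : w ≠ y := fun h => hacyc w (h ▸ hwy)
    have haxw : AltX W x w := fun n =>
      ⟨hdxw n, le_trans (hxy.2 n).2 (Nat.add_le_add_right (hdwy n) 1)⟩
    have hawy : AltX W w y := fun n =>
      ⟨hdwy n, le_trans (hdxw n) (hxy.2 n).2⟩
    constructor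
    · exact (hiff x w hxwne).mpr ((alternate_iff_altX hxwne W).mpr (Or.inl haxw))
    · exact (hiff w y hwyne).mpr ((alternate_iff_altX hwyne W).mpr (Or.inl hawy))

end PartA

section PartB

variable [Fintype V]

open Classical in
/-- sorted list of the elements satisfying `S` -/
noncomputable def sL (t : V → V → Prop) [DecidableRel t] [IsTrans V t] [IsAntisymm V t]
    [IsTotal V t] (S : V → Prop) : List V :=
  (Finset.univ.sort t).filter (fun z => decide (S z))

variable (t : V → V → Prop) [DecidableRel t] [IsTrans V t] [IsAntisymm V t] [IsTotal V t]

lemma mem_sL {S : V → Prop} {z : V} : z ∈ sL t S ↔ S z := by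
  simp [sL, List.mem_filter, Finset.mem_sort]

lemma sL_nodup (S : V → Prop) : (sL t S).Nodup :=
  (Finset.sort_nodup _ t).filter _

lemma sL_sorted (S : V → Prop) : (sL t S).Pairwise t :=
  (Finset.pairwise_sort _ t).filter _

lemma sorted_pair_eq {l : List V} {x y : V} (hs : l.Pairwise t) (hn : l.Nodup)
    (hmem : ∀ z, z ∈ l ↔ (z = x ∨ z = y)) (hxy : x ≠ y) (ht : t x y) : l = [x, y] := by
  match l, hs, hn with
  | [], _, _ => exact absurd ((hmem x).mpr (Or.inl rfl)) (by simp)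
  | [a], _, _ =>
    have hxm := (hmem x).mpr (Or.inl rfl)
    have hym := (hmem y).mpr (Or.inr rfl)
    simp at hxm hym
    exact absurd (hxm.trans hym.symm) hxy
  | (a :: b :: l'), hs, hn =>
    have hab : a ≠ b := by
      intro h
      rw [List.nodup_cons] at hn
      exact hn.1 (h ▸ List.mem_cons_self (a := b) (l := l'))
    have hl' : l' = [] := by
      rw [List.eq_nil_iff_forall_not_mem]
      intro z hz
      have hzm : z = x ∨ z = y := (hmem z).mp (by simp [hz])
      have ham : a = x ∨ a = y := (hmem a).mp (by simp)
      have hbm : b = x ∨ b = y := (hmem b).mp (by simp)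
      rw [List.nodup_cons, List.nodup_cons] at hn
      have hza : z ≠ a := fun h => hn.1 (h ▸ (by simp [hz] : z ∈ b :: l'))
      have hzb : z ≠ b := fun h => hn.2.1 (h ▸ hz)
      rcases hzm with rfl | rfl <;> rcases ham with rfl | rfl <;>
        rcases hbm with rfl | rfl <;> simp_all
    subst hl'
    have ham : a = x ∨ a = y := (hmem a).mp (by simp)
    have hbm : b = x ∨ b = y := (hmem b).mp (by simp)
    have htab : t a b := by
      rw [List.pairwise_cons] at hs
      exact hs.1 b (by simp)
    rcases ham with rfl | rfl
    · rcases hbm with rfl | rfl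
      · exact absurd rfl hab
      · rfl
    · rcases hbm with rfl | rfl
      · exact absurd (antisymm htab ht) hab
      · exact absurd rfl hab

lemma nodup_single_eq {l : List V} {x : V} (hn : l.Nodup)
    (hmem : ∀ z, z ∈ l ↔ z = x) : l = [x] := by
  match l, hn with
  | [], _ => exact absurd ((hmem x).mpr rfl) (by simp)
  | [a], _ => rw [(hmem a).mp (by simp)]
  | (a :: b :: l'), hn =>
    have ha : a = x := (hmem a).mp (by simp)
    have hb : b = x := (hmem b).mp (by simp)
    rw [List.nodup_cons] at hn
    exact absurd (ha.trans hb.symm ▸ List.mem_cons_self (a := b) (l := l')) hn.1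

/-- evaluation of a pair filter on a sorted segment: both present -/
lemma sL_pair_both {S : V → Prop} {x y : V} (hxy : x ≠ y) (ht : t x y)
    (hSx : S x) (hSy : S y) : (sL t S).filter (pairP x y) = [x, y] := by
  apply sorted_pair_eq t ((sL_sorted t S).filter _) ((sL_nodup t S).filter _) _ hxy ht
  intro z
  constructor
  · intro hz
    have := List.of_mem_filter hz
    simpa using this
  · intro hz
    rcases hz with rfl | rfl
    · exact List.mem_filter.mpr ⟨mem_sL t |>.mpr hSx, by simp⟩
    · exact List.mem_filter.mpr ⟨mem_sL t |>.mpr hSy, by simp⟩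

lemma sL_pair_left {S : V → Prop} {x y : V} (hSx : S x) (hSy : ¬ S y) :
    (sL t S).filter (pairP x y) = [x] := by
  apply nodup_single_eq ((sL_nodup t S).filter _)
  intro z
  constructor
  · intro hz
    have h1 := List.of_mem_filter hz
    have h2 := List.mem_of_mem_filter hz
    rw [mem_sL t] at h2
    simp only [decide_eq_true_eq] at h1
    rcases h1 with rfl | rfl
    · rfl
    · exact absurd h2 hSy
  · rintro rfl
    exact List.mem_filter.mpr ⟨mem_sL t |>.mpr hSx, by simp⟩

lemma sL_pair_right {S : V → Prop} {x y : V} (hSx : ¬ S x) (hSy : S y) :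
    (sL t S).filter (pairP x y) = [y] := by
  apply nodup_single_eq ((sL_nodup t S).filter _)
  intro z
  constructor
  · intro hz
    have h1 := List.of_mem_filter hz
    have h2 := List.mem_of_mem_filter hz
    rw [mem_sL t] at h2
    simp only [decide_eq_true_eq] at h1
    rcases h1 with rfl | rfl
    · exact absurd h2 hSx
    · rfl
  · rintro rfl
    exact List.mem_filter.mpr ⟨mem_sL t |>.mpr hSy, by simp⟩

lemma sL_pair_none {S : V → Prop} {x y : V} (hSx : ¬ S x) (hSy : ¬ S y) :
    (sL t S).filter (pairP x y) = [] := by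
  rw [List.eq_nil_iff_forall_not_mem]
  intro z hz
  have h1 := List.of_mem_filter hz
  have h2 := List.mem_of_mem_filter hz
  rw [mem_sL t] at h2
  simp only [decide_eq_true_eq] at h1
  rcases h1 with rfl | rfl
  · exact hSx h2
  · exact hSy h2

variable (E : V → V → Prop)

/-- the five classes relative to a vertex c -/
def pIN (c z : V) : Prop := E z c
def pOUT (c z : V) : Prop := E c z
def pAA (c z : V) : Prop := ¬ E z c ∧ ¬ E c z ∧ z ≠ c ∧ Relation.TransGen E z c
def pCC (c z : V) : Prop := ¬ E z c ∧ ¬ E c z ∧ z ≠ c ∧ ¬ Relation.TransGen E z c ∧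
  Relation.TransGen E c z
def pAC (c z : V) : Prop := ¬ E z c ∧ ¬ E c z ∧ z ≠ c ∧ ¬ Relation.TransGen E z c ∧
  ¬ Relation.TransGen E c z

/-- the 2-uniform block word for vertex c -/
noncomputable def blockW (c : V) : List V :=
  sL t (fun z => pAA E c z ∨ pIN E c z ∨ pAC E c z) ++ sL t (pAA E c) ++ [c]
    ++ sL t (pOUT E c) ++ sL t (pIN E c) ++ [c]
    ++ sL t (pCC E c) ++ sL t (pAC E c) ++ sL t (pOUT E c) ++ sL t (pCC E c)

lemma classify {c z : V} (hacyc : ∀ x, ¬ Relation.TransGen E x x) (hzc : z ≠ c) :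
    pIN E c z ∨ pOUT E c z ∨ pAA E c z ∨ pCC E c z ∨ pAC E c z := by
  by_cases h1 : E z c
  · exact Or.inl h1
  by_cases h2 : E c z
  · exact Or.inr (Or.inl h2)
  by_cases h3 : Relation.TransGen E z c
  · exact Or.inr (Or.inr (Or.inl ⟨h1, h2, hzc, h3⟩))
  by_cases h4 : Relation.TransGen E c z
  · exact Or.inr (Or.inr (Or.inr (Or.inl ⟨h1, h2, hzc, h3, h4⟩)))
  · exact Or.inr (Or.inr (Or.inr (Or.inr ⟨h1, h2, hzc, h3, h4⟩)))

lemma not_class_self {c : V} (hacyc : ∀ x, ¬ Relation.TransGen E x x) :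
    ¬ pIN E c c ∧ ¬ pOUT E c c ∧ ¬ pAA E c c ∧ ¬ pCC E c c ∧ ¬ pAC E c c := by
  refine ⟨fun h => hacyc c (.single h), fun h => hacyc c (.single h), fun h => h.2.2.1 rfl,
    fun h => h.2.2.1 rfl, fun h => h.2.2.1 rfl⟩

variable {G : SimpleGraph V}

lemma blockW_filter_arc
    (hEadj : ∀ x y, E x y → G.Adj x y)
    (hor : ∀ x y, G.Adj x y → E x y ∨ E y x)
    (hacyc : ∀ x, ¬ Relation.TransGen E x x)
    (hkey : ∀ x y w, E x y → Relation.TransGen E x w → Relation.TransGen E w y →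
      G.Adj x w ∧ G.Adj w y)
    (hsub : ∀ x y, Relation.TransGen E x y → t x y)
    {x y : V} (hxy : E x y) (c : V) :
    (blockW t E c).filter (pairP x y) = [x, y, x, y] := by
  have hEasym : ∀ {a b : V}, E a b → E b a → False := fun h1 h2 =>
    hacyc _ ((Relation.TransGen.single h1).trans (.single h2))
  have hneq : x ≠ y := by rintro rfl; exact hacyc x (.single hxy)
  have htxy : t x y := hsub _ _ (.single hxy)
  have hnadjE : ∀ {a b : V}, ¬ E a b → ¬ E b a → ¬ G.Adj a b := fun h1 h2 h =>
    (hor _ _ h).elim h1 h2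
  unfold blockW
  simp only [List.filter_append]
  by_cases hcx : c = x
  · subst hcx
    have hnsc := not_class_self E (c := c) hacyc
    have hnS1 : ¬ (pAA E c c ∨ pIN E c c ∨ pAC E c c) := by
      rintro (q | q | q)
      · exact hnsc.2.2.1 q
      · exact hnsc.1 q
      · exact hnsc.2.2.2.2 q
    have hnS1y : ¬ (pAA E c y ∨ pIN E c y ∨ pAC E c y) := by
      rintro (q | q | q)
      · exact q.2.1 hxy
      · exact hEasym hxy q
      · exact q.2.1 hxy
    rw [sL_pair_none t (S := (fun z => pAA E c z ∨ pIN E c z ∨ pAC E c z)) hnS1 hnS1y,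
        sL_pair_none t (S := (pAA E c)) hnsc.2.2.1 (fun q => q.2.1 hxy),
        sL_pair_right t (S := (pOUT E c)) hnsc.2.1 hxy,
        sL_pair_none t (S := (pIN E c)) hnsc.1 (fun q => hEasym hxy q),
        sL_pair_none t (S := (pCC E c)) hnsc.2.2.2.1 (fun q => q.2.1 hxy),
        sL_pair_none t (S := (pAC E c)) hnsc.2.2.2.2 (fun q => q.2.1 hxy)]
    simp [hneq]
  by_cases hcy : c = y
  · subst hcy
    have hnsc := not_class_self E (c := c) hacyc
    have hnS1 : ¬ (pAA E c c ∨ pIN E c c ∨ pAC E c c) := by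
      rintro (q | q | q)
      · exact hnsc.2.2.1 q
      · exact hnsc.1 q
      · exact hnsc.2.2.2.2 q
    rw [sL_pair_left t (S := (fun z => pAA E c z ∨ pIN E c z ∨ pAC E c z)) (Or.inr (Or.inl hxy)) hnS1,
        sL_pair_none t (S := (pAA E c)) (fun q => q.1 hxy) hnsc.2.2.1,
        sL_pair_none t (S := (pOUT E c)) (fun q => hEasym q hxy) hnsc.2.1,
        sL_pair_left t (S := (pIN E c)) hxy hnsc.1,
        sL_pair_none t (S := (pCC E c)) (fun q => q.1 hxy) hnsc.2.2.2.1,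
        sL_pair_none t (S := (pAC E c)) (fun q => q.1 hxy) hnsc.2.2.2.2]
    simp [hneq]
  · have hxc : x ≠ c := fun h => hcx h.symm
    have hyc : y ≠ c := fun h => hcy h.symm
    rcases classify E hacyc hxc with hx | hx | hx | hx | hx <;>
      rcases classify E hacyc hyc with hy | hy | hy | hy | hy
    · -- IN, IN
      rw [sL_pair_both t (S := (fun z => pAA E c z ∨ pIN E c z ∨ pAC E c z)) hneq htxy (Or.inr (Or.inl hx)) (Or.inr (Or.inl hy)),
          sL_pair_none t (S := (pAA E c)) (fun q => q.1 hx) (fun q => q.1 hy),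
          sL_pair_none t (S := (pOUT E c)) (fun q => hEasym hx q) (fun q => hEasym hy q),
          sL_pair_both t (S := (pIN E c)) hneq htxy hx hy,
          sL_pair_none t (S := (pCC E c)) (fun q => q.1 hx) (fun q => q.1 hy),
          sL_pair_none t (S := (pAC E c)) (fun q => q.1 hx) (fun q => q.1 hy)]
      simp [hcx, hcy]
    · -- IN, OUT
      rw [sL_pair_left t (S := (fun z => pAA E c z ∨ pIN E c z ∨ pAC E c z)) (Or.inr (Or.inl hx)) (fun q => q.elim (fun q1 => q1.2.1 hy) (fun q2 => q2.elim (fun q3 => hEasym hy q3) (fun q4 => q4.2.1 hy))),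
          sL_pair_none t (S := (pAA E c)) (fun q => q.1 hx) (fun q => q.2.1 hy),
          sL_pair_right t (S := (pOUT E c)) (fun q => hEasym hx q) hy,
          sL_pair_left t (S := (pIN E c)) hx (fun q => hEasym q hy),
          sL_pair_none t (S := (pCC E c)) (fun q => q.1 hx) (fun q => q.2.1 hy),
          sL_pair_none t (S := (pAC E c)) (fun q => q.1 hx) (fun q => q.2.1 hy)]
      simp [hcx, hcy]
    · -- IN, AA
      exact absurd (hkey x c y hx (.single hxy) hy.2.2.2).2 (hnadjE hy.1 hy.2.1)
    · -- IN, CC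
      exact absurd (hkey x y c hxy (.single hx) hy.2.2.2.2).2 (hnadjE hy.2.1 hy.1)
    · -- IN, AC
      rw [sL_pair_both t (S := (fun z => pAA E c z ∨ pIN E c z ∨ pAC E c z)) hneq htxy (Or.inr (Or.inl hx)) (Or.inr (Or.inr hy)),
          sL_pair_none t (S := (pAA E c)) (fun q => q.1 hx) (fun q => hy.2.2.2.1 q.2.2.2),
          sL_pair_none t (S := (pOUT E c)) (fun q => hEasym hx q) (fun q => hy.2.1 q),
          sL_pair_left t (S := (pIN E c)) hx (fun q => hy.1 q),
          sL_pair_none t (S := (pCC E c)) (fun q => q.1 hx) (fun q => hy.2.2.2.2 q.2.2.2.2),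
          sL_pair_right t (S := (pAC E c)) (fun q => q.1 hx) hy]
      simp [hcx, hcy]
    · -- OUT, IN
      exact absurd ((Relation.TransGen.single hx).trans ((Relation.TransGen.single hxy).trans (.single hy))) (hacyc c)
    · -- OUT, OUT
      rw [sL_pair_none t (S := (fun z => pAA E c z ∨ pIN E c z ∨ pAC E c z)) (fun q => q.elim (fun q1 => q1.2.1 hx) (fun q2 => q2.elim (fun q3 => hEasym hx q3) (fun q4 => q4.2.1 hx))) (fun q => q.elim (fun q1 => q1.2.1 hy) (fun q2 => q2.elim (fun q3 => hEasym hy q3) (fun q4 => q4.2.1 hy))),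
          sL_pair_none t (S := (pAA E c)) (fun q => q.2.1 hx) (fun q => q.2.1 hy),
          sL_pair_both t (S := (pOUT E c)) hneq htxy hx hy,
          sL_pair_none t (S := (pIN E c)) (fun q => hEasym q hx) (fun q => hEasym q hy),
          sL_pair_none t (S := (pCC E c)) (fun q => q.2.1 hx) (fun q => q.2.1 hy),
          sL_pair_none t (S := (pAC E c)) (fun q => q.2.1 hx) (fun q => q.2.1 hy)]
      simp [hcx, hcy]
    · -- OUT, AA
      exact absurd ((Relation.TransGen.single hx).trans ((Relation.TransGen.single hxy).trans hy.2.2.2)) (hacyc c)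
    · -- OUT, CC
      rw [sL_pair_none t (S := (fun z => pAA E c z ∨ pIN E c z ∨ pAC E c z)) (fun q => q.elim (fun q1 => q1.2.1 hx) (fun q2 => q2.elim (fun q3 => hEasym hx q3) (fun q4 => q4.2.1 hx))) (fun q => q.elim (fun q1 => hy.2.2.2.1 q1.2.2.2) (fun q2 => q2.elim (fun q3 => hy.1 q3) (fun q4 => q4.2.2.2.2 hy.2.2.2.2))),
          sL_pair_none t (S := (pAA E c)) (fun q => q.2.1 hx) (fun q => hy.2.2.2.1 q.2.2.2),
          sL_pair_left t (S := (pOUT E c)) hx (fun q => hy.2.1 q),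
          sL_pair_none t (S := (pIN E c)) (fun q => hEasym q hx) (fun q => hy.1 q),
          sL_pair_right t (S := (pCC E c)) (fun q => q.2.1 hx) hy,
          sL_pair_none t (S := (pAC E c)) (fun q => q.2.1 hx) (fun q => q.2.2.2.2 hy.2.2.2.2)]
      simp [hcx, hcy]
    · -- OUT, AC
      exact absurd ((Relation.TransGen.single hx).trans (.single hxy)) hy.2.2.2.2
    · -- AA, IN
      rw [sL_pair_both t (S := (fun z => pAA E c z ∨ pIN E c z ∨ pAC E c z)) hneq htxy (Or.inl hx) (Or.inr (Or.inl hy)),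
          sL_pair_left t (S := (pAA E c)) hx (fun q => q.1 hy),
          sL_pair_none t (S := (pOUT E c)) (fun q => hx.2.1 q) (fun q => hEasym hy q),
          sL_pair_right t (S := (pIN E c)) (fun q => hx.1 q) hy,
          sL_pair_none t (S := (pCC E c)) (fun q => q.2.2.2.1 hx.2.2.2) (fun q => q.1 hy),
          sL_pair_none t (S := (pAC E c)) (fun q => q.2.2.2.1 hx.2.2.2) (fun q => q.1 hy)]
      simp [hcx, hcy]
    · -- AA, OUT
      exact absurd (hkey x y c hxy hx.2.2.2 (.single hy)).1 (hnadjE hx.1 hx.2.1)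
    · -- AA, AA
      rw [sL_pair_both t (S := (fun z => pAA E c z ∨ pIN E c z ∨ pAC E c z)) hneq htxy (Or.inl hx) (Or.inl hy),
          sL_pair_both t (S := (pAA E c)) hneq htxy hx hy,
          sL_pair_none t (S := (pOUT E c)) (fun q => hx.2.1 q) (fun q => hy.2.1 q),
          sL_pair_none t (S := (pIN E c)) (fun q => hx.1 q) (fun q => hy.1 q),
          sL_pair_none t (S := (pCC E c)) (fun q => q.2.2.2.1 hx.2.2.2) (fun q => q.2.2.2.1 hy.2.2.2),
          sL_pair_none t (S := (pAC E c)) (fun q => q.2.2.2.1 hx.2.2.2) (fun q => q.2.2.2.1 hy.2.2.2)]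
      simp [hcx, hcy]
    · -- AA, CC
      exact absurd (hkey x y c hxy hx.2.2.2 hy.2.2.2.2).1 (hnadjE hx.1 hx.2.1)
    · -- AA, AC
      rw [sL_pair_both t (S := (fun z => pAA E c z ∨ pIN E c z ∨ pAC E c z)) hneq htxy (Or.inl hx) (Or.inr (Or.inr hy)),
          sL_pair_left t (S := (pAA E c)) hx (fun q => hy.2.2.2.1 q.2.2.2),
          sL_pair_none t (S := (pOUT E c)) (fun q => hx.2.1 q) (fun q => hy.2.1 q),
          sL_pair_none t (S := (pIN E c)) (fun q => hx.1 q) (fun q => hy.1 q),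
          sL_pair_none t (S := (pCC E c)) (fun q => q.2.2.2.1 hx.2.2.2) (fun q => hy.2.2.2.2 q.2.2.2.2),
          sL_pair_right t (S := (pAC E c)) (fun q => q.2.2.2.1 hx.2.2.2) hy]
      simp [hcx, hcy]
    · -- CC, IN
      exact absurd (hx.2.2.2.2.trans ((Relation.TransGen.single hxy).trans (.single hy))) (hacyc c)
    · -- CC, OUT
      exact absurd (hkey c y x hy hx.2.2.2.2 (.single hxy)).1 (hnadjE hx.2.1 hx.1)
    · -- CC, AA
      exact absurd (hx.2.2.2.2.trans ((Relation.TransGen.single hxy).trans hy.2.2.2)) (hacyc c)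
    · -- CC, CC
      rw [sL_pair_none t (S := (fun z => pAA E c z ∨ pIN E c z ∨ pAC E c z)) (fun q => q.elim (fun q1 => hx.2.2.2.1 q1.2.2.2) (fun q2 => q2.elim (fun q3 => hx.1 q3) (fun q4 => q4.2.2.2.2 hx.2.2.2.2))) (fun q => q.elim (fun q1 => hy.2.2.2.1 q1.2.2.2) (fun q2 => q2.elim (fun q3 => hy.1 q3) (fun q4 => q4.2.2.2.2 hy.2.2.2.2))),
          sL_pair_none t (S := (pAA E c)) (fun q => hx.2.2.2.1 q.2.2.2) (fun q => hy.2.2.2.1 q.2.2.2),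
          sL_pair_none t (S := (pOUT E c)) (fun q => hx.2.1 q) (fun q => hy.2.1 q),
          sL_pair_none t (S := (pIN E c)) (fun q => hx.1 q) (fun q => hy.1 q),
          sL_pair_both t (S := (pCC E c)) hneq htxy hx hy,
          sL_pair_none t (S := (pAC E c)) (fun q => q.2.2.2.2 hx.2.2.2.2) (fun q => q.2.2.2.2 hy.2.2.2.2)]
      simp [hcx, hcy]
    · -- CC, AC
      exact absurd (hx.2.2.2.2.trans (.single hxy)) hy.2.2.2.2
    · -- AC, IN
      exact absurd ((Relation.TransGen.single hxy).trans (.single hy)) hx.2.2.2.1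
    · -- AC, OUT
      rw [sL_pair_left t (S := (fun z => pAA E c z ∨ pIN E c z ∨ pAC E c z)) (Or.inr (Or.inr hx)) (fun q => q.elim (fun q1 => q1.2.1 hy) (fun q2 => q2.elim (fun q3 => hEasym hy q3) (fun q4 => q4.2.1 hy))),
          sL_pair_none t (S := (pAA E c)) (fun q => hx.2.2.2.1 q.2.2.2) (fun q => q.2.1 hy),
          sL_pair_right t (S := (pOUT E c)) (fun q => hx.2.1 q) hy,
          sL_pair_none t (S := (pIN E c)) (fun q => hx.1 q) (fun q => hEasym q hy),
          sL_pair_none t (S := (pCC E c)) (fun q => hx.2.2.2.2 q.2.2.2.2) (fun q => q.2.1 hy),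
          sL_pair_left t (S := (pAC E c)) hx (fun q => q.2.1 hy)]
      simp [hcx, hcy]
    · -- AC, AA
      exact absurd ((Relation.TransGen.single hxy).trans hy.2.2.2) hx.2.2.2.1
    · -- AC, CC
      rw [sL_pair_left t (S := (fun z => pAA E c z ∨ pIN E c z ∨ pAC E c z)) (Or.inr (Or.inr hx)) (fun q => q.elim (fun q1 => hy.2.2.2.1 q1.2.2.2) (fun q2 => q2.elim (fun q3 => hy.1 q3) (fun q4 => q4.2.2.2.2 hy.2.2.2.2))),
          sL_pair_none t (S := (pAA E c)) (fun q => hx.2.2.2.1 q.2.2.2) (fun q => hy.2.2.2.1 q.2.2.2),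
          sL_pair_none t (S := (pOUT E c)) (fun q => hx.2.1 q) (fun q => hy.2.1 q),
          sL_pair_none t (S := (pIN E c)) (fun q => hx.1 q) (fun q => hy.1 q),
          sL_pair_right t (S := (pCC E c)) (fun q => hx.2.2.2.2 q.2.2.2.2) hy,
          sL_pair_left t (S := (pAC E c)) hx (fun q => q.2.2.2.2 hy.2.2.2.2)]
      simp [hcx, hcy]
    · -- AC, AC
      rw [sL_pair_both t (S := (fun z => pAA E c z ∨ pIN E c z ∨ pAC E c z)) hneq htxy (Or.inr (Or.inr hx)) (Or.inr (Or.inr hy)),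
          sL_pair_none t (S := (pAA E c)) (fun q => hx.2.2.2.1 q.2.2.2) (fun q => hy.2.2.2.1 q.2.2.2),
          sL_pair_none t (S := (pOUT E c)) (fun q => hx.2.1 q) (fun q => hy.2.1 q),
          sL_pair_none t (S := (pIN E c)) (fun q => hx.1 q) (fun q => hy.1 q),
          sL_pair_none t (S := (pCC E c)) (fun q => hx.2.2.2.2 q.2.2.2.2) (fun q => hy.2.2.2.2 q.2.2.2.2),
          sL_pair_both t (S := (pAC E c)) hneq htxy hx hy]
      simp [hcx, hcy]

lemma blockW_not_alt
    (hEadj : ∀ x y, E x y → G.Adj x y)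
    (hacyc : ∀ x, ¬ Relation.TransGen E x x)
    {x y c : V} (hxy : x ≠ y) (hnadj : ¬ G.Adj x y) (hc : c = x ∨ c = y) :
    ¬ ((blockW t E c).filter (pairP x y)).Chain' (· ≠ ·) := by
  have hnsc := not_class_self E (c := c) hacyc
  have hnS1c : ¬ (pAA E c c ∨ pIN E c c ∨ pAC E c c) := by
    rintro (q | q | q)
    · exact hnsc.2.2.1 q
    · exact hnsc.1 q
    · exact hnsc.2.2.2.2 q
  unfold blockW
  simp only [List.filter_append]
  rcases hc with rfl | rfl
  · -- c = x ; classify y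
    have hne : y ≠ c := Ne.symm hxy
    have hnE1 : ¬ E c y := fun h => hnadj (hEadj _ _ h)
    have hnE2 : ¬ E y c := fun h => hnadj ((hEadj _ _ h).symm)
    rcases classify E hacyc hne with hcl | hcl | hcl | hcl | hcl
    · exact absurd hcl hnE2
    · exact absurd hcl hnE1
    · -- AA
      rw [sL_pair_right t (S := (fun z => pAA E c z ∨ pIN E c z ∨ pAC E c z)) hnS1c (Or.inl hcl),
          sL_pair_right t (S := (pAA E c)) hnsc.2.2.1 hcl,
          sL_pair_none t (S := (pOUT E c)) hnsc.2.1 (fun q => hcl.2.1 q),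
          sL_pair_none t (S := (pIN E c)) hnsc.1 (fun q => hcl.1 q),
          sL_pair_none t (S := (pCC E c)) hnsc.2.2.2.1 (fun q => q.2.2.2.1 hcl.2.2.2),
          sL_pair_none t (S := (pAC E c)) hnsc.2.2.2.2 (fun q => q.2.2.2.1 hcl.2.2.2)]
      simp [List.Chain', List.isChain_cons_cons, hne.symm, hne]
    · -- CC
      rw [sL_pair_none t (S := (fun z => pAA E c z ∨ pIN E c z ∨ pAC E c z)) hnS1c (fun q => q.elim (fun q1 => hcl.2.2.2.1 q1.2.2.2) (fun q2 => q2.elim (fun q3 => hcl.1 q3) (fun q4 => q4.2.2.2.2 hcl.2.2.2.2))),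
          sL_pair_none t (S := (pAA E c)) hnsc.2.2.1 (fun q => hcl.2.2.2.1 q.2.2.2),
          sL_pair_none t (S := (pOUT E c)) hnsc.2.1 (fun q => hcl.2.1 q),
          sL_pair_none t (S := (pIN E c)) hnsc.1 (fun q => hcl.1 q),
          sL_pair_right t (S := (pCC E c)) hnsc.2.2.2.1 hcl,
          sL_pair_none t (S := (pAC E c)) hnsc.2.2.2.2 (fun q => q.2.2.2.2 hcl.2.2.2.2)]
      simp [List.Chain', List.isChain_cons_cons, hne.symm, hne]
    · -- AC
      rw [sL_pair_right t (S := (fun z => pAA E c z ∨ pIN E c z ∨ pAC E c z)) hnS1c (Or.inr (Or.inr hcl)),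
          sL_pair_none t (S := (pAA E c)) hnsc.2.2.1 (fun q => hcl.2.2.2.1 q.2.2.2),
          sL_pair_none t (S := (pOUT E c)) hnsc.2.1 (fun q => hcl.2.1 q),
          sL_pair_none t (S := (pIN E c)) hnsc.1 (fun q => hcl.1 q),
          sL_pair_none t (S := (pCC E c)) hnsc.2.2.2.1 (fun q => hcl.2.2.2.2 q.2.2.2.2),
          sL_pair_right t (S := (pAC E c)) hnsc.2.2.2.2 hcl]
      simp [List.Chain', List.isChain_cons_cons, hne.symm, hne]
  · -- c = y ; classify x
    have hne : x ≠ c := hxy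
    have hnE1 : ¬ E x c := fun h => hnadj (hEadj _ _ h)
    have hnE2 : ¬ E c x := fun h => hnadj ((hEadj _ _ h).symm)
    rcases classify E hacyc hne with hcl | hcl | hcl | hcl | hcl
    · exact absurd hcl hnE1
    · exact absurd hcl hnE2
    · -- AA
      rw [sL_pair_left t (S := (fun z => pAA E c z ∨ pIN E c z ∨ pAC E c z)) (Or.inl hcl) hnS1c,
          sL_pair_left t (S := (pAA E c)) hcl hnsc.2.2.1,
          sL_pair_none t (S := (pOUT E c)) (fun q => hcl.2.1 q) hnsc.2.1,
          sL_pair_none t (S := (pIN E c)) (fun q => hcl.1 q) hnsc.1,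
          sL_pair_none t (S := (pCC E c)) (fun q => q.2.2.2.1 hcl.2.2.2) hnsc.2.2.2.1,
          sL_pair_none t (S := (pAC E c)) (fun q => q.2.2.2.1 hcl.2.2.2) hnsc.2.2.2.2]
      simp [List.Chain', List.isChain_cons_cons, hne.symm, hne]
    · -- CC
      rw [sL_pair_none t (S := (fun z => pAA E c z ∨ pIN E c z ∨ pAC E c z)) (fun q => q.elim (fun q1 => hcl.2.2.2.1 q1.2.2.2) (fun q2 => q2.elim (fun q3 => hcl.1 q3) (fun q4 => q4.2.2.2.2 hcl.2.2.2.2))) hnS1c,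
          sL_pair_none t (S := (pAA E c)) (fun q => hcl.2.2.2.1 q.2.2.2) hnsc.2.2.1,
          sL_pair_none t (S := (pOUT E c)) (fun q => hcl.2.1 q) hnsc.2.1,
          sL_pair_none t (S := (pIN E c)) (fun q => hcl.1 q) hnsc.1,
          sL_pair_left t (S := (pCC E c)) hcl hnsc.2.2.2.1,
          sL_pair_none t (S := (pAC E c)) (fun q => q.2.2.2.2 hcl.2.2.2.2) hnsc.2.2.2.2]
      simp [List.Chain', List.isChain_cons_cons, hne.symm, hne]
    · -- AC
      rw [sL_pair_left t (S := (fun z => pAA E c z ∨ pIN E c z ∨ pAC E c z)) (Or.inr (Or.inr hcl)) hnS1c,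
          sL_pair_none t (S := (pAA E c)) (fun q => hcl.2.2.2.1 q.2.2.2) hnsc.2.2.1,
          sL_pair_none t (S := (pOUT E c)) (fun q => hcl.2.1 q) hnsc.2.1,
          sL_pair_none t (S := (pIN E c)) (fun q => hcl.1 q) hnsc.1,
          sL_pair_none t (S := (pCC E c)) (fun q => hcl.2.2.2.2 q.2.2.2.2) hnsc.2.2.2.1,
          sL_pair_left t (S := (pAC E c)) hcl hnsc.2.2.2.2]
      simp [List.Chain', List.isChain_cons_cons, hne.symm, hne]

open Classical in
lemma count_sL {S : V → Prop} (z : V) : (sL t S).count z = if S z then 1 else 0 := by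
  by_cases h : S z
  · rw [if_pos h]
    have h1 := List.nodup_iff_count_le_one.mp (sL_nodup t S) z
    have h2 := List.count_pos_iff.mpr ((mem_sL t).mpr h)
    omega
  · rw [if_neg h]
    exact List.count_eq_zero.mpr (fun hm => h ((mem_sL t).mp hm))

lemma count_blockW (hacyc : ∀ x, ¬ Relation.TransGen E x x) (c z : V) :
    (blockW t E c).count z = 2 := by
  have hnsc := not_class_self E (c := c) hacyc
  unfold blockW
  simp only [List.count_append]
  by_cases hzc : z = c
  · subst hzc
    simp [count_sL, hnsc.1, hnsc.2.1, hnsc.2.2.1, hnsc.2.2.2.1, hnsc.2.2.2.2]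
  · rcases classify E hacyc hzc with hcl | hcl | hcl | hcl | hcl
    · simp [count_sL, hcl, hzc, List.count_singleton, Ne.symm hzc, show ¬ pAA E c z from fun q => q.1 hcl,
        show ¬ pOUT E c z from fun q => hacyc c ((Relation.TransGen.single q).trans (.single hcl)),
        show ¬ pCC E c z from fun q => q.1 hcl, show ¬ pAC E c z from fun q => q.1 hcl]
    · simp [count_sL, hcl, hzc, List.count_singleton, Ne.symm hzc, show ¬ pAA E c z from fun q => q.2.1 hcl,
        show ¬ pIN E c z from fun q => hacyc c ((Relation.TransGen.single hcl).trans (.single q)),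
        show ¬ pCC E c z from fun q => q.2.1 hcl, show ¬ pAC E c z from fun q => q.2.1 hcl]
    · simp [count_sL, hcl, hzc, List.count_singleton, Ne.symm hzc, show ¬ pIN E c z from hcl.1,
        show ¬ pOUT E c z from hcl.2.1,
        show ¬ pCC E c z from fun q => q.2.2.2.1 hcl.2.2.2,
        show ¬ pAC E c z from fun q => q.2.2.2.1 hcl.2.2.2]
    · simp [count_sL, hcl, hzc, List.count_singleton, Ne.symm hzc, show ¬ pIN E c z from hcl.1,
        show ¬ pOUT E c z from hcl.2.1,
        show ¬ pAA E c z from fun q => hcl.2.2.2.1 q.2.2.2,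
        show ¬ pAC E c z from fun q => q.2.2.2.2 hcl.2.2.2.2]
    · simp [count_sL, hcl, hzc, List.count_singleton, Ne.symm hzc, show ¬ pIN E c z from hcl.1,
        show ¬ pOUT E c z from hcl.2.1,
        show ¬ pAA E c z from fun q => hcl.2.2.2.1 q.2.2.2,
        show ¬ pCC E c z from fun q => hcl.2.2.2.2 q.2.2.2.2]

noncomputable def bigW (a b : V) : List V :=
  ((((Finset.univ.erase a).erase b).sort t).map (blockW t E)).flatten

lemma chain_flatten_pat {x y : V} (hxy : x ≠ y) : ∀ (L : List (List V)),
    (∀ l ∈ L, l = [x, y, x, y]) →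
    (L.flatten).Chain' (· ≠ ·) ∧ ∀ z ∈ L.flatten.head?, z = x := by
  intro L
  induction L with
  | nil => simp [List.Chain']
  | cons l L ih =>
    intro h
    have hl := h l (List.mem_cons_self (a := l) (l := L))
    have ihh := ih (fun l' hl' => h l' (List.mem_cons_of_mem _ hl'))
    subst hl
    rw [List.flatten_cons]
    constructor
    · rw [List.Chain', List.isChain_append]
      refine ⟨by simp [hxy, hxy.symm], ihh.1, ?_⟩
      intro p hp q hq
      have hlast : ([x, y, x, y] : List V).getLast? = some y := rfl
      rw [hlast] at hp
      have hp' : p = y := (show y = p by simpa using hp).symm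
      have hq' : q = x := ihh.2 q hq
      rw [hp', hq']
      exact hxy.symm
    · intro z hz
      have hh : (([x, y, x, y] : List V) ++ L.flatten).head? = some x := rfl
      rw [hh] at hz
      exact (show x = z by simpa using hz).symm

theorem partB_main
    (hEadj : ∀ x y, E x y → G.Adj x y)
    (hor : ∀ x y, G.Adj x y → E x y ∨ E y x)
    (hacyc : ∀ x, ¬ Relation.TransGen E x x)
    (hkey : ∀ x y w, E x y → Relation.TransGen E x w → Relation.TransGen E w y →
      G.Adj x w ∧ G.Adj w y)
    (hsub : ∀ x y, Relation.TransGen E x y → t x y)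
    (hn : 3 ≤ Fintype.card V)
    {a b : V} (hab : G.Adj a b) :
    Uniform (bigW t E a b) (2 * (Fintype.card V - 2)) ∧ Represents (bigW t E a b) G := by
  have hne_ab : a ≠ b := hab.ne
  have hb1 : b ∈ Finset.univ.erase a := Finset.mem_erase.mpr ⟨hne_ab.symm, Finset.mem_univ b⟩
  have hlen : (((Finset.univ.erase a).erase b).sort t).length = Fintype.card V - 2 := by
    rw [Finset.length_sort, Finset.card_erase_of_mem hb1,
      Finset.card_erase_of_mem (Finset.mem_univ a), Finset.card_univ]
    omega
  constructor
  · intro z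
    show (bigW t E a b).count z = _
    unfold bigW
    rw [List.count_flatten, List.map_map]
    have he : (List.count z ∘ blockW t E) = fun _ => 2 :=
      funext (fun c => count_blockW t E hacyc c z)
    rw [he, List.map_const', List.sum_replicate, smul_eq_mul, hlen]
    omega
  constructor
  · intro z
    have hvsne : ((Finset.univ.erase a).erase b).sort t ≠ [] := by
      intro hcon
      rw [hcon] at hlen
      simp at hlen
      omega
    obtain ⟨c, hc⟩ := List.exists_mem_of_ne_nil _ hvsne
    unfold bigW
    rw [List.mem_flatten]
    refine ⟨blockW t E c, List.mem_map_of_mem hc, ?_⟩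
    exact List.count_pos_iff.mp (by rw [count_blockW t E hacyc c z]; norm_num)
  · intro x y hxy
    constructor
    · intro hadj
      rcases hor _ _ hadj with hE | hE
      · rw [alternate_def]
        unfold bigW
        rw [List.filter_flatten, List.map_map]
        have hmapeq : (List.filter (pairP x y) ∘ blockW t E) = fun _ => [x, y, x, y] :=
          funext (fun c => blockW_filter_arc t E hEadj hor hacyc hkey hsub hE c)
        rw [hmapeq, List.map_const']
        exact (chain_flatten_pat hxy _ (fun l hl => List.eq_of_mem_replicate hl)).1
      · rw [alternate_def, pairP_comm]
        unfold bigW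
        rw [List.filter_flatten, List.map_map]
        have hmapeq : (List.filter (pairP y x) ∘ blockW t E) = fun _ => [y, x, y, x] :=
          funext (fun c => blockW_filter_arc t E hEadj hor hacyc hkey hsub hE c)
        rw [hmapeq, List.map_const']
        exact (chain_flatten_pat hxy.symm _ (fun l hl => List.eq_of_mem_replicate hl)).1
    · intro halt
      by_contra hnadj
      have hcex : ∃ c, (c = x ∨ c = y) ∧ c ≠ a ∧ c ≠ b := by
        by_cases hx1 : x = a
        · refine ⟨y, Or.inr rfl, ?_, ?_⟩
          · intro hcon; exact hxy (hx1.trans hcon.symm)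
          · intro hcon; subst hx1; subst hcon; exact hnadj hab
        · by_cases hx2 : x = b
          · refine ⟨y, Or.inr rfl, ?_, ?_⟩
            · intro hcon; subst hx2; subst hcon; exact hnadj hab.symm
            · intro hcon; exact hxy (hx2.trans hcon.symm)
          · exact ⟨x, Or.inl rfl, hx1, hx2⟩
      obtain ⟨c, hcxy, hca, hcb⟩ := hcex
      have hcvs : c ∈ ((Finset.univ.erase a).erase b).sort t := by
        rw [Finset.mem_sort]
        exact Finset.mem_erase.mpr ⟨hcb, Finset.mem_erase.mpr ⟨hca, Finset.mem_univ c⟩⟩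
      obtain ⟨s1, s2, hsplit⟩ := List.append_of_mem hcvs
      rw [alternate_def] at halt
      unfold bigW at halt
      rw [hsplit, List.map_append, List.map_cons, List.flatten_append, List.flatten_cons,
        List.filter_append, List.filter_append] at halt
      have h1 := (List.isChain_append.mp halt).2.1
      have h2 := (List.isChain_append.mp h1).1
      exact blockW_not_alt t E hEadj hacyc hxy hnadj hcxy h2

include t in
theorem edgeless_main (hn : 3 ≤ Fintype.card V) (hno : ∀ x y : V, ¬ G.Adj x y) :
    ∃ W : List V, Uniform W (2 * (Fintype.card V - 2)) ∧ Represents W G := by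
  set P := sL t (fun _ => True) with hP
  refine ⟨(List.replicate (Fintype.card V - 2) (P ++ P.reverse)).flatten, ?_, ?_, ?_⟩
  · intro z
    rw [List.count_flatten, List.map_replicate, List.sum_replicate, smul_eq_mul]
    have hc : (P ++ P.reverse).count z = 2 := by
      rw [List.count_append, List.count_reverse, count_sL]
      simp
    rw [hc]
    omega
  · intro z
    rw [List.mem_flatten]
    refine ⟨P ++ P.reverse, List.mem_replicate.mpr ⟨by omega, rfl⟩, ?_⟩
    rw [List.mem_append]
    left
    rw [hP, mem_sL]
    trivial
  · intro x y hxy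
    constructor
    · intro hadj
      exact absurd hadj (hno x y)
    · intro halt
      exfalso
      obtain ⟨m, hm⟩ : ∃ m, Fintype.card V - 2 = m + 1 := ⟨Fintype.card V - 3, by omega⟩
      rw [alternate_def] at halt
      rw [List.filter_flatten, List.map_replicate, hm, List.replicate_succ,
        List.flatten_cons] at halt
      have h1 := (List.isChain_append.mp halt).1
      rw [List.filter_append, List.filter_reverse] at h1
      rcases total_of t x y with ht | ht
      · rw [sL_pair_both t (S := fun _ => True) hxy ht trivial trivial] at h1
        simp [List.Chain', List.isChain_append, List.isChain_cons_cons] at h1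
      · rw [pairP_comm, sL_pair_both t (S := fun _ => True) hxy.symm ht trivial trivial] at h1
        simp [List.Chain', List.isChain_append, List.isChain_cons_cons] at h1

end PartB

end Stmt5

/-- Every word-representable graph on `n ≥ 3` vertices is
`2(n-2)`-word-representable. -/
theorem stmt_5 {V : Type*} [Fintype V] [DecidableEq V] (G : SimpleGraph V)
    (hn : 3 ≤ Fintype.card V) (h : WordRepresentable G) :
    KWordRepresentable G (2 * (Fintype.card V - 2)) := by
  classical
  obtain ⟨W₀, hW₀⟩ := h
  obtain ⟨E, hEadj, hor, hacyc, hkey⟩ := Stmt5.exists_orientation hW₀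
  haveI hpo : IsPartialOrder V (fun a b => a = b ∨ Relation.TransGen E a b) := {
    refl := fun a => Or.inl rfl
    trans := by
      rintro a b c (rfl | hab) (rfl | hbc)
      · exact Or.inl rfl
      · exact Or.inr hbc
      · exact Or.inr hab
      · exact Or.inr (hab.trans hbc)
    antisymm := by
      intro a b h1 h2
      rcases h1 with rfl | hab
      · rfl
      · rcases h2 with rfl | hba
        · rfl
        · exact absurd (hab.trans hba) (hacyc a) }
  obtain ⟨t, hlin, hst⟩ := extend_partialOrder (fun a b => a = b ∨ Relation.TransGen E a b)
  haveI : IsLinearOrder V t := hlin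
  haveI : DecidableRel t := fun a b => Classical.propDecidable _
  have hsub : ∀ x y : V, Relation.TransGen E x y → t x y := fun x y hxy => hst x y (Or.inr hxy)
  by_cases hadj : ∃ a b, G.Adj a b
  · obtain ⟨a, b, hab⟩ := hadj
    obtain ⟨hu, hr⟩ := Stmt5.partB_main t E hEadj hor hacyc hkey hsub hn hab
    exact ⟨_, hu, hr⟩
  · push_neg at hadj
    obtain ⟨W, hu, hr⟩ := Stmt5.edgeless_main (G := G) t hn hadj
    exact ⟨W, hu, hr⟩
end

section
/- Every 3-colorable graph is word-representable; specifically, given a proper 3-coloring with color classes C1, C2, C3, orienting every edge from the lower-indexed class to the higher-indexed class yields a semi-transitive orientation. -/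
variable {V : Type*}

namespace Stmt7Aux
set_option linter.unusedSectionVars false

variable {V : Type*} [DecidableEq V]

lemma q_false {q : V → Bool} {x y : V} (hq : ∀ z, q z = true ↔ (z = x ∨ z = y))
    {z : V} (hzx : z ≠ x) (hzy : z ≠ y) : q z = false := by
  rw [Bool.eq_false_iff]; intro h
  rcases (hq z).1 h with h | h <;> [exact hzx h; exact hzy h]

lemma filter_nil_of {q : V → Bool} {x y : V} (hq : ∀ z, q z = true ↔ (z = x ∨ z = y))
    {l : List V} (hx : x ∉ l) (hy : y ∉ l) : l.filter q = [] := by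
  rw [List.filter_eq_nil_iff]; intro a ha h
  rcases (hq a).1 h with h | h <;> subst h <;> [exact hx ha; exact hy ha]

lemma filter_single_of {q : V → Bool} {x y : V} (hq : ∀ z, q z = true ↔ (z = x ∨ z = y))
    {l : List V} (hl : l.Nodup) (hx : x ∈ l) (hy : y ∉ l) : l.filter q = [x] := by
  induction l with
  | nil => simp at hx
  | cons a t ih =>
    rw [List.nodup_cons] at hl
    by_cases hax : a = x
    · subst hax
      rw [List.filter_cons, if_pos ((hq a).2 (Or.inl rfl))]
      rw [filter_nil_of hq hl.1 (fun h => hy (List.mem_cons_of_mem _ h))]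
    · have hay : a ≠ y := fun h => hy (h ▸ List.mem_cons_self)
      rw [List.filter_cons, if_neg (by simp [q_false hq hax hay])]
      exact ih hl.2 ((List.mem_cons.1 hx).resolve_left (fun h => hax h.symm))
        (fun h => hy (List.mem_cons_of_mem _ h))

lemma ffilter_eq {q : V → Bool} {x y : V} (hq : ∀ z, q z = true ↔ (z = x ∨ z = y))
    {l : List V} (hl : l.Nodup) (h : V → Bool) (hx : x ∈ l) (hy : y ∉ l) :
    (l.filter h).filter q = (if h x = true then [x] else []) := by
  by_cases hh : h x = true
  · rw [if_pos hh]
    exact filter_single_of hq (hl.filter _) (List.mem_filter.2 ⟨hx, hh⟩)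
      (fun hm => hy (List.mem_filter.1 hm).1)
  · rw [if_neg hh]
    exact filter_nil_of hq (fun hm => hh (List.mem_filter.1 hm).2)
      (fun hm => hy (List.mem_filter.1 hm).1)

lemma ffilter_nil {q : V → Bool} {x y : V} (hq : ∀ z, q z = true ↔ (z = x ∨ z = y))
    {l : List V} (h : V → Bool) (hx : x ∉ l) (hy : y ∉ l) :
    (l.filter h).filter q = [] :=
  filter_nil_of hq (fun hm => hx (List.mem_filter.1 hm).1)
    (fun hm => hy (List.mem_filter.1 hm).1)

lemma not_chain_of_infix {c : V} {l : List V} (h : [c, c] <:+: l) :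
    ¬ l.Chain' (· ≠ ·) := by
  intro hc
  have := hc.infix h
  simp [List.Chain', List.isChain_cons_cons] at this

/-- alternating chain patterns -/
lemma chain_rep_aux {x y : V} (hxy : x ≠ y) :
    ∀ s : ℕ, List.Chain' (· ≠ ·) (x :: (List.replicate s [y, x]).flatten) := by
  intro s
  induction s with
  | zero => simp [List.Chain']
  | succ n ih =>
    rw [List.replicate_succ]
    simp only [List.flatten_cons, List.cons_append]
    exact List.isChain_cons.2 ⟨by simp [hxy], List.isChain_cons.2 ⟨by
      rcases n with _ | n <;> simp [List.replicate_succ, hxy.symm], by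
      simpa [List.Chain'] using ih⟩⟩

lemma chain_rep {x y : V} (hxy : x ≠ y) (n : ℕ) :
    List.Chain' (· ≠ ·) ((List.replicate n [x, y]).flatten) := by
  induction n with
  | zero => simp [List.Chain']
  | succ m ih =>
    rw [List.replicate_succ]
    simp only [List.flatten_cons, List.cons_append]
    exact List.isChain_cons.2 ⟨by simp [hxy], List.isChain_cons.2 ⟨by
      rcases m with _ | m <;> simp [List.replicate_succ, hxy.symm], by simpa [List.Chain'] using ih⟩⟩

lemma pat_head {x y : V} (t : ℕ) (R : List (List V)) :
    ((List.replicate t [x, y] ++ [[x, y, x]] ++ R).flatten).head? = some x := by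
  rcases t with _ | t <;> simp [List.replicate_succ]

lemma chain_pat {x y : V} (hxy : x ≠ y) (t s : ℕ) :
    List.Chain' (· ≠ ·)
      ((List.replicate t [x, y] ++ [[x, y, x]] ++ List.replicate s [y, x]).flatten) := by
  induction t with
  | zero =>
    simp only [List.replicate, List.nil_append, List.flatten_cons, List.cons_append,
      List.flatten]
    refine List.isChain_cons.2 ⟨by simp [hxy], List.isChain_cons.2 ⟨?_, ?_⟩⟩
    · simp [hxy.symm]
    · simpa [List.Chain'] using chain_rep_aux hxy s
  | succ m ih =>
    rw [List.replicate_succ]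
    simp only [List.cons_append, List.flatten_cons]
    refine List.isChain_cons.2 ⟨by simp [hxy], List.isChain_cons.2 ⟨?_, ?_⟩⟩
    · rw [List.nil_append, pat_head]
      simp [hxy.symm]
    · simpa [List.Chain'] using ih


variable [Fintype V]

noncomputable def adjb (G : SimpleGraph V) (d u : V) : Bool :=
  @decide (G.Adj d u) (Classical.propDecidable _)

lemma adjb_iff {G : SimpleGraph V} {d u : V} : adjb G d u = true ↔ G.Adj d u := by
  simp [adjb]

noncomputable def cls (g : V → Fin 3) (c : Fin 3) : List V := (Finset.univ.filter fun v => g v = c).toList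

lemma mem_cls {g : V → Fin 3} {u : V} {c : Fin 3} : u ∈ cls g c ↔ g u = c := by simp [cls]

lemma nodup_cls (g : V → Fin 3) (c : Fin 3) : (cls g c).Nodup := Finset.nodup_toList _

lemma notmem_cls {g : V → Fin 3} {u : V} {c c' : Fin 3} (hu : g u = c) (hne : c ≠ c') :
    u ∉ cls g c' := fun h => hne (hu.symm.trans (mem_cls.1 h))

lemma ne_of_col {g : V → Fin 3} {u v : V} {c c' : Fin 3} (hu : g u = c) (hv : g v = c')
    (hne : c ≠ c') : u ≠ v := fun h => hne (hu.symm.trans (h ▸ hv))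

variable (G : SimpleGraph V) (g : V → Fin 3)

noncomputable def mid (d : V) : List V :=
  (cls g 0).filter (fun u => !adjb G d u) ++ [d] ++ (cls g 0).filter (fun u => adjb G d u)
    ++ ((cls g 1).filter (fun u => adjb G d u) ++ [d] ++ (cls g 1).filter (fun u => !adjb G d u))

noncomputable def rseg : List V → List V → List (List V)
  | _, [] => []
  | pre, d :: post => (post ++ mid G g d ++ pre) :: rseg (pre ++ [d]) post

noncomputable def rho (b : V) : List V :=
  (cls g 0).filter (fun u => adjb G b u) ++ [b] ++ (cls g 0).filter (fun u => !adjb G b u)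
    ++ ((cls g 1).filter (fun u => !decide (u = b)) ++ cls g 2)

noncomputable def tau1 : List V := cls g 0 ++ cls g 1 ++ cls g 2

noncomputable def tau2 : List V := (cls g 0).reverse ++ (cls g 1).reverse ++ cls g 2

noncomputable def segs : List (List V) :=
  rseg G g [] (cls g 2) ++ (cls g 1).map (rho G g) ++ [tau1 g, tau2 g]

noncomputable def word : List V := (segs G g).flatten

section Pair

variable {q : V → Bool} {x y : V}

/-- POS-AB : mid filter -/
lemma midf_ab (hq : ∀ z, q z = true ↔ (z = x ∨ z = y)) (hx : g x = 0) (hy : g y = 1)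
    {d : V} (hd : g d = 2) : (mid G g d).filter q = [x, y] := by
  have hq' : ∀ z, q z = true ↔ (z = y ∨ z = x) := fun z => by rw [hq]; exact or_comm
  have hxm : x ∈ cls g 0 := mem_cls.2 hx
  have hym : y ∈ cls g 1 := mem_cls.2 hy
  have hyn : y ∉ cls g 0 := notmem_cls hy (by decide)
  have hxn : x ∉ cls g 1 := notmem_cls hx (by decide)
  have hdq : q d = false := q_false hq (ne_of_col hd hx (by decide)) (ne_of_col hd hy (by decide))
  simp only [mid, List.filter_append, List.filter_cons, List.filter_nil, hdq,
    Bool.false_eq_true, if_false]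
  rw [ffilter_eq hq (nodup_cls g 0) (fun u => !adjb G d u) hxm hyn,
      ffilter_eq hq (nodup_cls g 0) (fun u => adjb G d u) hxm hyn,
      ffilter_eq hq' (nodup_cls g 1) (fun u => adjb G d u) hym hxn,
      ffilter_eq hq' (nodup_cls g 1) (fun u => !adjb G d u) hym hxn]
  by_cases h1 : adjb G d x = true <;> by_cases h2 : adjb G d y = true <;> simp [h1, h2]

/-- POS-AB : rho filter (includes the b = y case, where adjacency is used). -/
lemma rhof_ab (hq : ∀ z, q z = true ↔ (z = x ∨ z = y)) (hx : g x = 0) (hy : g y = 1)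
    (hadj : G.Adj x y) {b : V} (hb : g b = 1) : (rho G g b).filter q = [x, y] := by
  have hq' : ∀ z, q z = true ↔ (z = y ∨ z = x) := fun z => by rw [hq]; exact or_comm
  have hxm : x ∈ cls g 0 := mem_cls.2 hx
  have hym : y ∈ cls g 1 := mem_cls.2 hy
  have hyn : y ∉ cls g 0 := notmem_cls hy (by decide)
  have hxn : x ∉ cls g 1 := notmem_cls hx (by decide)
  have hx2 : x ∉ cls g 2 := notmem_cls hx (by decide)
  have hy2 : y ∉ cls g 2 := notmem_cls hy (by decide)
  by_cases hby : b = y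
  · subst hby
    have h1 : adjb G b x = true := adjb_iff.2 hadj.symm
    simp only [rho, List.filter_append, List.filter_cons, List.filter_nil]
    rw [ffilter_eq hq (nodup_cls g 0) _ hxm hyn,
        ffilter_eq hq (nodup_cls g 0) (fun u => !adjb G b u) hxm hyn,
        if_pos ((hq b).2 (Or.inr rfl)),
        ffilter_eq hq' (nodup_cls g 1) (fun u => !decide (u = b)) hym hxn,
        filter_nil_of hq hx2 hy2]
    simp [h1]
  · have hbq : q b = false := q_false hq (ne_of_col hb hx (by decide)) hby
    simp only [rho, List.filter_append, List.filter_cons, List.filter_nil, hbq,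
      Bool.false_eq_true, if_false]
    rw [ffilter_eq hq (nodup_cls g 0) (fun u => adjb G b u) hxm hyn,
        ffilter_eq hq (nodup_cls g 0) (fun u => !adjb G b u) hxm hyn,
        ffilter_eq hq' (nodup_cls g 1) (fun u => !decide (u = b)) hym hxn,
        filter_nil_of hq hx2 hy2]
    have hyb : ¬ y = b := fun h => hby h.symm
    by_cases h1 : adjb G b x = true <;> simp [h1, hyb]

/-- POS-AB : rho filter for b ≠ y, no adjacency needed. -/
lemma rhof_ab' (hq : ∀ z, q z = true ↔ (z = x ∨ z = y)) (hx : g x = 0) (hy : g y = 1)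
    {b : V} (hb : g b = 1) (hby : b ≠ y) : (rho G g b).filter q = [x, y] := by
  have hq' : ∀ z, q z = true ↔ (z = y ∨ z = x) := fun z => by rw [hq]; exact or_comm
  have hxm : x ∈ cls g 0 := mem_cls.2 hx
  have hym : y ∈ cls g 1 := mem_cls.2 hy
  have hyn : y ∉ cls g 0 := notmem_cls hy (by decide)
  have hxn : x ∉ cls g 1 := notmem_cls hx (by decide)
  have hbq : q b = false := q_false hq (ne_of_col hb hx (by decide)) hby
  simp only [rho, List.filter_append, List.filter_cons, List.filter_nil, hbq,
    Bool.false_eq_true, if_false]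
  rw [ffilter_eq hq (nodup_cls g 0) (fun u => adjb G b u) hxm hyn,
      ffilter_eq hq (nodup_cls g 0) (fun u => !adjb G b u) hxm hyn,
      ffilter_eq hq' (nodup_cls g 1) (fun u => !decide (u = b)) hym hxn,
      filter_nil_of hq (notmem_cls hx (by decide)) (notmem_cls hy (by decide))]
  have hyb : ¬ y = b := fun h => hby h.symm
  by_cases h1 : adjb G b x = true <;> simp [h1, hyb]

lemma tau1f_ab (hq : ∀ z, q z = true ↔ (z = x ∨ z = y)) (hx : g x = 0) (hy : g y = 1) :
    (tau1 g).filter q = [x, y] := by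
  have hq' : ∀ z, q z = true ↔ (z = y ∨ z = x) := fun z => by rw [hq]; exact or_comm
  simp only [tau1, List.filter_append]
  rw [filter_single_of hq (nodup_cls g 0) (mem_cls.2 hx) (notmem_cls hy (by decide)),
      filter_single_of hq' (nodup_cls g 1) (mem_cls.2 hy) (notmem_cls hx (by decide)),
      filter_nil_of hq (notmem_cls hx (by decide)) (notmem_cls hy (by decide))]
  rfl

lemma tau2f_ab (hq : ∀ z, q z = true ↔ (z = x ∨ z = y)) (hx : g x = 0) (hy : g y = 1) :
    (tau2 g).filter q = [x, y] := by
  have hq' : ∀ z, q z = true ↔ (z = y ∨ z = x) := fun z => by rw [hq]; exact or_comm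
  simp only [tau2, List.filter_append, List.filter_reverse]
  rw [filter_single_of hq (nodup_cls g 0) (mem_cls.2 hx) (notmem_cls hy (by decide)),
      filter_single_of hq' (nodup_cls g 1) (mem_cls.2 hy) (notmem_cls hx (by decide)),
      filter_nil_of hq (notmem_cls hx (by decide)) (notmem_cls hy (by decide))]
  rfl


/-- POS-D: mid filter for d's own segment. Pair is (x,y) with x the color-2 vertex. -/
lemma midf_down (hq : ∀ z, q z = true ↔ (z = x ∨ z = y)) (hx : g x = 2)
    (hy01 : g y = 0 ∨ g y = 1) (hadj : G.Adj x y) :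
    (mid G g x).filter q = [x, y, x] := by
  have hq' : ∀ z, q z = true ↔ (z = y ∨ z = x) := fun z => by rw [hq]; exact or_comm
  have hxq : q x = true := (hq x).2 (Or.inl rfl)
  have hab : adjb G x y = true := adjb_iff.2 hadj
  have hx0 : x ∉ cls g 0 := notmem_cls hx (by decide)
  have hx1 : x ∉ cls g 1 := notmem_cls hx (by decide)
  rcases hy01 with hy | hy
  · have hym : y ∈ cls g 0 := mem_cls.2 hy
    have hyn : y ∉ cls g 1 := notmem_cls hy (by decide)
    simp only [mid, List.filter_append, List.filter_cons, List.filter_nil, hxq, if_true]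
    rw [ffilter_eq hq' (nodup_cls g 0) (fun u => !adjb G x u) hym hx0,
        ffilter_eq hq' (nodup_cls g 0) (fun u => adjb G x u) hym hx0,
        ffilter_nil hq (fun u => adjb G x u) hx1 hyn,
        ffilter_nil hq (fun u => !adjb G x u) hx1 hyn]
    simp [hab]
  · have hym : y ∈ cls g 1 := mem_cls.2 hy
    have hyn : y ∉ cls g 0 := notmem_cls hy (by decide)
    simp only [mid, List.filter_append, List.filter_cons, List.filter_nil, hxq, if_true]
    rw [ffilter_eq hq' (nodup_cls g 1) (fun u => !adjb G x u) hym hx1,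
        ffilter_eq hq' (nodup_cls g 1) (fun u => adjb G x u) hym hx1,
        ffilter_nil hq (fun u => adjb G x u) hx0 hyn,
        ffilter_nil hq (fun u => !adjb G x u) hx0 hyn]
    simp [hab]

/-- POS-D: mid filter for another color-2 vertex's segment. -/
lemma midf_dother (hq : ∀ z, q z = true ↔ (z = x ∨ z = y)) (hx : g x = 2)
    (hy01 : g y = 0 ∨ g y = 1) {d : V} (hd : g d = 2) (hne : d ≠ x) :
    (mid G g d).filter q = [y] := by
  have hq' : ∀ z, q z = true ↔ (z = y ∨ z = x) := fun z => by rw [hq]; exact or_comm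
  have hdy : d ≠ y := by
    rcases hy01 with hy | hy
    · exact ne_of_col hd hy (by decide)
    · exact ne_of_col hd hy (by decide)
  have hdq : q d = false := q_false hq hne hdy
  have hx0 : x ∉ cls g 0 := notmem_cls hx (by decide)
  have hx1 : x ∉ cls g 1 := notmem_cls hx (by decide)
  rcases hy01 with hy | hy
  · have hym : y ∈ cls g 0 := mem_cls.2 hy
    have hyn : y ∉ cls g 1 := notmem_cls hy (by decide)
    simp only [mid, List.filter_append, List.filter_cons, List.filter_nil, hdq,
      Bool.false_eq_true, if_false]
    rw [ffilter_eq hq' (nodup_cls g 0) (fun u => !adjb G d u) hym hx0,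
        ffilter_eq hq' (nodup_cls g 0) (fun u => adjb G d u) hym hx0,
        ffilter_nil hq (fun u => adjb G d u) hx1 hyn,
        ffilter_nil hq (fun u => !adjb G d u) hx1 hyn]
    by_cases h1 : adjb G d y = true <;> simp [h1]
  · have hym : y ∈ cls g 1 := mem_cls.2 hy
    have hyn : y ∉ cls g 0 := notmem_cls hy (by decide)
    simp only [mid, List.filter_append, List.filter_cons, List.filter_nil, hdq,
      Bool.false_eq_true, if_false]
    rw [ffilter_eq hq' (nodup_cls g 1) (fun u => !adjb G d u) hym hx1,
        ffilter_eq hq' (nodup_cls g 1) (fun u => adjb G d u) hym hx1,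
        ffilter_nil hq (fun u => adjb G d u) hx0 hyn,
        ffilter_nil hq (fun u => !adjb G d u) hx0 hyn]
    by_cases h1 : adjb G d y = true <;> simp [h1]

/-- POS-D: rho filter. -/
lemma rhof_d (hq : ∀ z, q z = true ↔ (z = x ∨ z = y)) (hx : g x = 2)
    (hy01 : g y = 0 ∨ g y = 1) {b : V} (hb : g b = 1) :
    (rho G g b).filter q = [y, x] := by
  have hq' : ∀ z, q z = true ↔ (z = y ∨ z = x) := fun z => by rw [hq]; exact or_comm
  have hx0 : x ∉ cls g 0 := notmem_cls hx (by decide)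
  have hx1 : x ∉ cls g 1 := notmem_cls hx (by decide)
  have hcl2 : (cls g 2).filter q = [x] := filter_single_of hq (nodup_cls g 2) (mem_cls.2 hx)
    (by rcases hy01 with hy | hy <;> exact notmem_cls hy (by decide))
  rcases hy01 with hy | hy
  · have hym : y ∈ cls g 0 := mem_cls.2 hy
    have hyn : y ∉ cls g 1 := notmem_cls hy (by decide)
    have hbq : q b = false := q_false hq (ne_of_col hb hx (by decide)) (ne_of_col hb hy (by decide))
    simp only [rho, List.filter_append, List.filter_cons, List.filter_nil, hbq,
      Bool.false_eq_true, if_false]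
    rw [ffilter_eq hq' (nodup_cls g 0) (fun u => adjb G b u) hym hx0,
        ffilter_eq hq' (nodup_cls g 0) (fun u => !adjb G b u) hym hx0,
        ffilter_nil hq (fun u => !decide (u = b)) hx1 hyn, hcl2]
    by_cases h1 : adjb G b y = true <;> simp [h1]
  · have hym : y ∈ cls g 1 := mem_cls.2 hy
    have hyn : y ∉ cls g 0 := notmem_cls hy (by decide)
    by_cases hby : b = y
    · subst hby
      simp only [rho, List.filter_append, List.filter_cons, List.filter_nil,
        if_pos ((hq b).2 (Or.inr rfl))]
      rw [ffilter_nil hq (fun u => adjb G b u) hx0 hyn,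
          ffilter_nil hq (fun u => !adjb G b u) hx0 hyn,
          ffilter_eq hq' (nodup_cls g 1) (fun u => !decide (u = b)) hym hx1, hcl2]
      simp
    · have hbq : q b = false := q_false hq (ne_of_col hb hx (by decide)) hby
      simp only [rho, List.filter_append, List.filter_cons, List.filter_nil, hbq,
        Bool.false_eq_true, if_false]
      rw [ffilter_nil hq (fun u => adjb G b u) hx0 hyn,
          ffilter_nil hq (fun u => !adjb G b u) hx0 hyn,
          ffilter_eq hq' (nodup_cls g 1) (fun u => !decide (u = b)) hym hx1, hcl2]
      have hyb : ¬ y = b := fun h => hby h.symm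
      simp [hyb]

/-- POS-D: tau filters. -/
lemma tau1f_d (hq : ∀ z, q z = true ↔ (z = x ∨ z = y)) (hx : g x = 2)
    (hy01 : g y = 0 ∨ g y = 1) : (tau1 g).filter q = [y, x] := by
  have hq' : ∀ z, q z = true ↔ (z = y ∨ z = x) := fun z => by rw [hq]; exact or_comm
  have hcl2 : (cls g 2).filter q = [x] := filter_single_of hq (nodup_cls g 2) (mem_cls.2 hx)
    (by rcases hy01 with hy | hy <;> exact notmem_cls hy (by decide))
  rcases hy01 with hy | hy
  · simp only [tau1, List.filter_append]
    rw [filter_single_of hq' (nodup_cls g 0) (mem_cls.2 hy) (notmem_cls hx (by decide)),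
        filter_nil_of hq (notmem_cls hx (by decide)) (notmem_cls hy (by decide)), hcl2]
    rfl
  · simp only [tau1, List.filter_append]
    rw [filter_nil_of hq (notmem_cls hx (by decide)) (notmem_cls hy (by decide)),
        filter_single_of hq' (nodup_cls g 1) (mem_cls.2 hy) (notmem_cls hx (by decide)), hcl2]
    rfl

lemma tau2f_d (hq : ∀ z, q z = true ↔ (z = x ∨ z = y)) (hx : g x = 2)
    (hy01 : g y = 0 ∨ g y = 1) : (tau2 g).filter q = [y, x] := by
  have hq' : ∀ z, q z = true ↔ (z = y ∨ z = x) := fun z => by rw [hq]; exact or_comm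
  have hcl2 : (cls g 2).filter q = [x] := filter_single_of hq (nodup_cls g 2) (mem_cls.2 hx)
    (by rcases hy01 with hy | hy <;> exact notmem_cls hy (by decide))
  rcases hy01 with hy | hy
  · simp only [tau2, List.filter_append, List.filter_reverse]
    rw [filter_single_of hq' (nodup_cls g 0) (mem_cls.2 hy) (notmem_cls hx (by decide)),
        filter_nil_of hq (notmem_cls hx (by decide)) (notmem_cls hy (by decide)), hcl2]
    rfl
  · simp only [tau2, List.filter_append, List.filter_reverse]
    rw [filter_nil_of hq (notmem_cls hx (by decide)) (notmem_cls hy (by decide)),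
        filter_single_of hq' (nodup_cls g 1) (mem_cls.2 hy) (notmem_cls hx (by decide)), hcl2]
    rfl

/-- NEG: the doubled occurrence of x inside its own mid segment. -/
lemma midf_kill (hq : ∀ z, q z = true ↔ (z = x ∨ z = y)) (hx : g x = 2)
    (hnadj : ¬ G.Adj x y) : [x, x] <:+: (mid G g x).filter q := by
  have hxq : q x = true := (hq x).2 (Or.inl rfl)
  have h2 : ((cls g 0).filter (fun u => adjb G x u)).filter q = [] := by
    refine filter_nil_of hq ?_ ?_
    · exact fun hm => notmem_cls hx (by decide) (List.mem_filter.1 hm).1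
    · exact fun hm => hnadj (adjb_iff.1 (List.mem_filter.1 hm).2)
  have h3 : ((cls g 1).filter (fun u => adjb G x u)).filter q = [] := by
    refine filter_nil_of hq ?_ ?_
    · exact fun hm => notmem_cls hx (by decide) (List.mem_filter.1 hm).1
    · exact fun hm => hnadj (adjb_iff.1 (List.mem_filter.1 hm).2)
  refine ⟨((cls g 0).filter (fun u => !adjb G x u)).filter q,
    ((cls g 1).filter (fun u => !adjb G x u)).filter q, ?_⟩
  simp only [mid, List.filter_append, List.filter_cons, List.filter_nil, hxq, if_true, h2, h3]
  simp

/-- NEG-AB: rho filter at b = y when x,y are not adjacent. -/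
lemma rhof_ab_neg (hq : ∀ z, q z = true ↔ (z = x ∨ z = y)) (hx : g x = 0) (hy : g y = 1)
    (hnadj : ¬ G.Adj x y) : (rho G g y).filter q = [y, x] := by
  have hyq : q y = true := (hq y).2 (Or.inr rfl)
  have hyn : y ∉ cls g 0 := notmem_cls hy (by decide)
  have h1 : ((cls g 0).filter (fun u => adjb G y u)).filter q = [] := by
    refine filter_nil_of hq ?_ ?_
    · exact fun hm => hnadj (adjb_iff.1 (List.mem_filter.1 hm).2).symm
    · exact fun hm => hyn (List.mem_filter.1 hm).1
  have h2 : ((cls g 0).filter (fun u => !adjb G y u)).filter q = [x] := by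
    refine filter_single_of hq ((nodup_cls g 0).filter _) ?_ (fun hm => hyn (List.mem_filter.1 hm).1)
    refine List.mem_filter.2 ⟨mem_cls.2 hx, ?_⟩
    simp only [Bool.not_eq_true']
    rw [Bool.eq_false_iff]
    exact fun h => hnadj (adjb_iff.1 h).symm
  have h3 : ((cls g 1).filter (fun u => !decide (u = y))).filter q = [] := by
    refine filter_nil_of hq (fun hm => notmem_cls hx (by decide) (List.mem_filter.1 hm).1) ?_
    intro hm
    have := (List.mem_filter.1 hm).2
    simp at this
  have h4 : (cls g 2).filter q = [] :=
    filter_nil_of hq (notmem_cls hx (by decide)) (notmem_cls hy (by decide))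
  simp only [rho, List.filter_append, List.filter_cons, List.filter_nil, hyq, if_true,
    h1, h2, h3, h4]
  simp

/-- NEG same color 0. -/
lemma tauf_same0 (hq : ∀ z, q z = true ↔ (z = x ∨ z = y)) (hx : g x = 0) (hy : g y = 0) :
    (tau1 g).filter q = (cls g 0).filter q ∧
      (tau2 g).filter q = ((cls g 0).filter q).reverse := by
  have e1 : (cls g 1).filter q = [] :=
    filter_nil_of hq (notmem_cls hx (by decide)) (notmem_cls hy (by decide))
  have e2 : (cls g 2).filter q = [] :=
    filter_nil_of hq (notmem_cls hx (by decide)) (notmem_cls hy (by decide))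
  constructor <;> simp [tau1, tau2, List.filter_append, List.filter_reverse, e1, e2]

lemma tauf_same1 (hq : ∀ z, q z = true ↔ (z = x ∨ z = y)) (hx : g x = 1) (hy : g y = 1) :
    (tau1 g).filter q = (cls g 1).filter q ∧
      (tau2 g).filter q = ((cls g 1).filter q).reverse := by
  have e1 : (cls g 0).filter q = [] :=
    filter_nil_of hq (notmem_cls hx (by decide)) (notmem_cls hy (by decide))
  have e2 : (cls g 2).filter q = [] :=
    filter_nil_of hq (notmem_cls hx (by decide)) (notmem_cls hy (by decide))
  constructor <;> simp [tau1, tau2, List.filter_append, List.filter_reverse, e1, e2]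

end Pair

lemma notmem_of_col {g : V → Fin 3} {l : List V} (hl : ∀ v ∈ l, g v = 2) {u : V} {c : Fin 3}
    (hu : g u = c) (hc : c ≠ 2) : u ∉ l := fun h => hc (hu.symm.trans (hl u h))

section Pair2

variable {q : V → Bool} {x y : V}

lemma rsegf_ab (hq : ∀ z, q z = true ↔ (z = x ∨ z = y)) (hx : g x = 0) (hy : g y = 1) :
    ∀ (post pre : List V), (∀ v ∈ post, g v = 2) → (∀ v ∈ pre, g v = 2) →
      ∀ S ∈ rseg G g pre post, S.filter q = [x, y] := by
  intro post
  induction post with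
  | nil => intro pre _ _ S hS; simp [rseg] at hS
  | cons d post ih =>
    intro pre hpost hpre S hS
    simp only [rseg] at hS
    rcases List.mem_cons.1 hS with rfl | hS
    · rw [List.filter_append, List.filter_append,
        filter_nil_of hq (notmem_of_col (fun v hv => hpost v (List.mem_cons_of_mem _ hv)) hx (by decide))
          (notmem_of_col (fun v hv => hpost v (List.mem_cons_of_mem _ hv)) hy (by decide)),
        midf_ab G g hq hx hy (hpost d (List.mem_cons_self)),
        filter_nil_of hq (notmem_of_col hpre hx (by decide)) (notmem_of_col hpre hy (by decide))]
      simp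
    · refine ih (pre ++ [d]) (fun v hv => hpost v (List.mem_cons_of_mem _ hv)) ?_ S hS
      intro v hv
      rcases List.mem_append.1 hv with h | h
      · exact hpre v h
      · rw [List.mem_singleton] at h; subst h; exact hpost v (List.mem_cons_self)

lemma rsegf_d_after (hq : ∀ z, q z = true ↔ (z = x ∨ z = y)) (hx2 : g x = 2)
    (hy01 : g y = 0 ∨ g y = 1) :
    ∀ (post pre : List V), (pre ++ post).Nodup → (∀ v ∈ pre ++ post, g v = 2) → x ∈ pre →
      (rseg G g pre post).map (List.filter q) = List.replicate post.length [y, x] := by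
  have hyn : ∀ (l : List V), (∀ v ∈ l, g v = 2) → y ∉ l := by
    intro l hl
    rcases hy01 with hy | hy
    · exact notmem_of_col hl hy (by decide)
    · exact notmem_of_col hl hy (by decide)
  intro post
  induction post with
  | nil => intro pre _ _ _; simp [rseg]
  | cons d post ih =>
    intro pre hnd hcol hxpre
    simp only [rseg, List.map_cons]
    have hcd : g d = 2 := hcol d (by simp)
    have hnd' := List.nodup_append.1 hnd
    have hdx : d ≠ x := fun h => (hnd'.2.2 x hxpre x (by simp [h])) rfl
    have hxp : x ∉ post := fun h => (hnd'.2.2 x hxpre x (by simp [h])) rfl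
    have seg1 : (post ++ mid G g d ++ pre).filter q = [y, x] := by
      rw [List.filter_append, List.filter_append,
        filter_nil_of hq hxp (hyn post (fun v hv => hcol v (by simp [hv]))),
        midf_dother G g hq hx2 hy01 hcd hdx,
        filter_single_of hq hnd'.1 hxpre (hyn pre (fun v hv => hcol v (by simp [hv])))]
      simp
    rw [seg1, ih (pre ++ [d]) (by simpa using hnd)
      (fun v hv => hcol v (by simpa [or_assoc, or_comm, or_left_comm] using hv))
      (List.mem_append_left _ hxpre)]
    simp [List.replicate_succ]

lemma rsegf_d_main (hq : ∀ z, q z = true ↔ (z = x ∨ z = y)) (hx2 : g x = 2)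
    (hy01 : g y = 0 ∨ g y = 1) (hadj : G.Adj x y) :
    ∀ (post pre : List V), (pre ++ post).Nodup → (∀ v ∈ pre ++ post, g v = 2) →
      x ∈ post → x ∉ pre →
      ∃ t s, (rseg G g pre post).map (List.filter q) =
        List.replicate t [x, y] ++ [[x, y, x]] ++ List.replicate s [y, x] := by
  have hyn : ∀ (l : List V), (∀ v ∈ l, g v = 2) → y ∉ l := by
    intro l hl
    rcases hy01 with hy | hy
    · exact notmem_of_col hl hy (by decide)
    · exact notmem_of_col hl hy (by decide)
  intro post
  induction post with
  | nil => intro pre _ _ h _; simp at h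
  | cons d post ih =>
    intro pre hnd hcol hxpost hxpre
    simp only [rseg, List.map_cons]
    have hnd' := List.nodup_append.1 hnd
    have hpostnd := hnd'.2.1
    by_cases hdx : d = x
    · have hxp : x ∉ post := hdx ▸ (List.nodup_cons.1 hpostnd).1
      have seg1 : (post ++ mid G g d ++ pre).filter q = [x, y, x] := by
        rw [hdx, List.filter_append, List.filter_append,
          filter_nil_of hq hxp (hyn post (fun v hv => hcol v (by simp [hv]))),
          midf_down G g hq hx2 hy01 hadj,
          filter_nil_of hq hxpre (hyn pre (fun v hv => hcol v (by simp [hv])))]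
        simp
      rw [seg1, rsegf_d_after G g hq hx2 hy01 post (pre ++ [d]) (by simpa using hnd)
        (fun v hv => hcol v (by simpa [or_assoc, or_comm, or_left_comm] using hv))
        (List.mem_append_right _ (by simp [hdx]))]
      exact ⟨0, post.length, by simp⟩
    · have hxpost' : x ∈ post := (List.mem_cons.1 hxpost).resolve_left (fun h => hdx h.symm)
      have hcd : g d = 2 := hcol d (by simp)
      have seg1 : (post ++ mid G g d ++ pre).filter q = [x, y] := by
        rw [List.filter_append, List.filter_append,
          filter_single_of hq (List.Nodup.of_cons hpostnd) hxpost'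
            (hyn post (fun v hv => hcol v (by simp [hv]))),
          midf_dother G g hq hx2 hy01 hcd hdx,
          filter_nil_of hq hxpre (hyn pre (fun v hv => hcol v (by simp [hv])))]
        simp
      obtain ⟨t, s, e⟩ := ih (pre ++ [d]) (by simpa using hnd)
        (fun v hv => hcol v (by simpa [or_assoc, or_comm, or_left_comm] using hv))
        hxpost'
        (by intro h; rcases List.mem_append.1 h with h | h;
            · exact hxpre h
            · rw [List.mem_singleton] at h; exact hdx h.symm)
      exact ⟨t + 1, s, by rw [seg1, e]; simp [List.replicate_succ]⟩

lemma rseg_own (x : V) : ∀ (post pre : List V), x ∈ post →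
    ∃ po pr, (po ++ mid G g x ++ pr) ∈ rseg G g pre post := by
  intro post
  induction post with
  | nil => simp
  | cons d post ih =>
    intro pre hx
    by_cases hdx : d = x
    · subst hdx
      exact ⟨post, pre, by simp only [rseg]; exact List.mem_cons_self⟩
    · obtain ⟨po, pr, h⟩ := ih (pre ++ [d]) ((List.mem_cons.1 hx).resolve_left (fun h => hdx h.symm))
      exact ⟨po, pr, by simp only [rseg]; exact List.mem_cons_of_mem _ h⟩

/-- POS-AB master -/
lemma chain_ab (hq : ∀ z, q z = true ↔ (z = x ∨ z = y)) (hx : g x = 0) (hy : g y = 1)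
    (hadj : G.Adj x y) : List.Chain' (· ≠ ·) ((word G g).filter q) := by
  have hxy : x ≠ y := ne_of_col hx hy (by decide)
  rw [word, List.filter_flatten]
  have hall : ∀ L ∈ (segs G g).map (List.filter q), L = [x, y] := by
    intro L hL
    obtain ⟨S, hS, rfl⟩ := List.mem_map.1 hL
    simp only [segs, List.mem_append, List.mem_map, List.mem_cons, List.mem_singleton,
      List.not_mem_nil, or_false] at hS
    rcases hS with (hS | ⟨b, hb, rfl⟩) | (rfl | rfl)
    · exact rsegf_ab G g hq hx hy (cls g 2) [] (fun v hv => mem_cls.1 hv) (by simp) S hS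
    · exact rhof_ab G g hq hx hy hadj (mem_cls.1 hb)
    · exact tau1f_ab g hq hx hy
    · exact tau2f_ab g hq hx hy
  rw [List.eq_replicate_of_mem hall]
  exact chain_rep hxy _

/-- POS-D master -/
lemma chain_d (hq : ∀ z, q z = true ↔ (z = x ∨ z = y)) (hx2 : g x = 2)
    (hy01 : g y = 0 ∨ g y = 1) (hadj : G.Adj x y) :
    List.Chain' (· ≠ ·) ((word G g).filter q) := by
  have hxy : x ≠ y := by
    rcases hy01 with hy | hy
    · exact ne_of_col hx2 hy (by decide)
    · exact ne_of_col hx2 hy (by decide)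
  rw [word, List.filter_flatten]
  have e0 : segs G g = rseg G g [] (cls g 2) ++ ((cls g 1).map (rho G g) ++ [tau1 g, tau2 g]) := by
    simp [segs]
  rw [e0, List.map_append]
  obtain ⟨t, s, e1⟩ := rsegf_d_main G g hq hx2 hy01 hadj (cls g 2) []
    (by simpa using nodup_cls g 2) (by simpa using fun v hv => mem_cls.1 hv)
    (mem_cls.2 hx2) (by simp)
  have hall : ∀ L ∈ ((cls g 1).map (rho G g) ++ [tau1 g, tau2 g]).map (List.filter q),
      L = [y, x] := by
    intro L hL
    obtain ⟨S, hS, rfl⟩ := List.mem_map.1 hL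
    simp only [List.mem_append, List.mem_map, List.mem_cons, List.mem_singleton,
      List.not_mem_nil, or_false] at hS
    rcases hS with ⟨b, hb, rfl⟩ | (rfl | rfl)
    · exact rhof_d G g hq hx2 hy01 (mem_cls.1 hb)
    · exact tau1f_d g hq hx2 hy01
    · exact tau2f_d g hq hx2 hy01
  rw [e1, List.eq_replicate_of_mem hall]
  set K := (((cls g 1).map (rho G g) ++ [tau1 g, tau2 g]).map (List.filter q)).length
  have e2 : List.replicate t [x, y] ++ [[x, y, x]] ++ List.replicate s [y, x]
      ++ List.replicate K [y, x]
      = List.replicate t [x, y] ++ [[x, y, x]] ++ List.replicate (s + K) [y, x] := by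
    rw [List.replicate_add]
    simp [List.append_assoc]
  rw [e2]
  exact chain_pat hxy t _

lemma infix_word {S : List V} (hS : S ∈ segs G g) {c : V} (h : [c, c] <:+: S.filter q) :
    [c, c] <:+: (word G g).filter q := by
  obtain ⟨s, t, he⟩ := List.append_of_mem hS
  rw [word, List.filter_flatten, he, List.map_append, List.map_cons, List.flatten_append,
    List.flatten_cons]
  refine h.trans ⟨(s.map (List.filter q)).flatten, (t.map (List.filter q)).flatten, by simp⟩

/-- NEG: non-adjacent pair with a color-2 member x. -/
lemma neg_kill (hq : ∀ z, q z = true ↔ (z = x ∨ z = y)) (hx2 : g x = 2)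
    (hnadj : ¬ G.Adj x y) : ¬ List.Chain' (· ≠ ·) ((word G g).filter q) := by
  obtain ⟨po, pr, hmem⟩ := rseg_own G g x (cls g 2) [] (mem_cls.2 hx2)
  have hS : (po ++ mid G g x ++ pr) ∈ segs G g := by
    simp only [segs, List.mem_append]
    exact Or.inl (Or.inl hmem)
  refine not_chain_of_infix (c := x) (infix_word G g hS ?_)
  refine (midf_kill G g hq hx2 hnadj).trans ⟨po.filter q, pr.filter q, ?_⟩
  simp [List.filter_append]

/-- NEG: same color 0. -/
lemma neg_same0 (hq : ∀ z, q z = true ↔ (z = x ∨ z = y)) (hx : g x = 0) (hy : g y = 0) :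
    ¬ List.Chain' (· ≠ ·) ((word G g).filter q) := by
  obtain ⟨e1, e2⟩ := tauf_same0 g hq hx hy
  have hxL : x ∈ (cls g 0).filter q :=
    List.mem_filter.2 ⟨mem_cls.2 hx, (hq x).2 (Or.inl rfl)⟩
  obtain ⟨M, e, hMe⟩ := (List.eq_nil_or_concat ((cls g 0).filter q)).resolve_left
    (List.ne_nil_of_mem hxL)
  apply not_chain_of_infix (c := e)
  have e0 : segs G g = (rseg G g [] (cls g 2) ++ (cls g 1).map (rho G g)) ++ [tau1 g, tau2 g] := by
    simp [segs]
  rw [word, List.filter_flatten, e0, List.map_append, List.flatten_append]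
  refine ⟨(((rseg G g [] (cls g 2) ++ (cls g 1).map (rho G g))).map (List.filter q)).flatten ++ M,
    M.reverse, ?_⟩
  simp [e1, e2, hMe, List.concat_eq_append, List.reverse_append]

/-- NEG: same color 1. -/
lemma neg_same1 (hq : ∀ z, q z = true ↔ (z = x ∨ z = y)) (hx : g x = 1) (hy : g y = 1) :
    ¬ List.Chain' (· ≠ ·) ((word G g).filter q) := by
  obtain ⟨e1, e2⟩ := tauf_same1 g hq hx hy
  have hxL : x ∈ (cls g 1).filter q :=
    List.mem_filter.2 ⟨mem_cls.2 hx, (hq x).2 (Or.inl rfl)⟩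
  obtain ⟨M, e, hMe⟩ := (List.eq_nil_or_concat ((cls g 1).filter q)).resolve_left
    (List.ne_nil_of_mem hxL)
  apply not_chain_of_infix (c := e)
  have e0 : segs G g = (rseg G g [] (cls g 2) ++ (cls g 1).map (rho G g)) ++ [tau1 g, tau2 g] := by
    simp [segs]
  rw [word, List.filter_flatten, e0, List.map_append, List.flatten_append]
  refine ⟨(((rseg G g [] (cls g 2) ++ (cls g 1).map (rho G g))).map (List.filter q)).flatten ++ M,
    M.reverse, ?_⟩
  simp [e1, e2, hMe, List.concat_eq_append, List.reverse_append]

/-- NEG: colors (0,1) non-adjacent. -/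
lemma neg_ab (hq : ∀ z, q z = true ↔ (z = x ∨ z = y)) (hx : g x = 0) (hy : g y = 1)
    (hnadj : ¬ G.Adj x y) : ¬ List.Chain' (· ≠ ·) ((word G g).filter q) := by
  obtain ⟨s, t, hsplit⟩ := List.append_of_mem (mem_cls.2 hy)
  have hnd : (cls g 1).Nodup := nodup_cls g 1
  rw [hsplit] at hnd
  have hynt : y ∉ t := by
    have := (List.nodup_append.1 hnd).2.1
    exact (List.nodup_cons.1 this).1
  apply not_chain_of_infix (c := x)
  rw [word, List.filter_flatten, segs, hsplit, List.map_append, List.map_append,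
    List.map_cons, List.map_append, List.map_cons]
  have ey : (rho G g y).filter q = [y, x] := rhof_ab_neg G g hq hx hy hnadj
  cases t with
  | nil =>
    rw [List.map_nil]
    refine ⟨((rseg G g [] (cls g ((2:Fin 3)))).map (List.filter q)).flatten
      ++ ((s.map (rho G g)).map (List.filter q)).flatten ++ [y], y :: (tau2 g).filter q, ?_⟩
    simp only [List.flatten_append, List.flatten_cons, List.flatten_nil]
    simp [ey, tau1f_ab g hq hx hy]
  | cons b t' =>
    have hb1 : g b = 1 := by
      have : b ∈ cls g 1 := by rw [hsplit]; simp
      exact mem_cls.1 this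
    have hby : b ≠ y := fun h => hynt (by simp [h])
    rw [List.map_cons, List.map_cons]
    refine ⟨((rseg G g [] (cls g ((2:Fin 3)))).map (List.filter q)).flatten
      ++ ((s.map (rho G g)).map (List.filter q)).flatten ++ [y],
      y :: (((t'.map (rho G g)).map (List.filter q)).flatten
        ++ ((tau1 g).filter q ++ ((tau2 g).filter q ++ []))), ?_⟩
    simp only [List.flatten_append, List.flatten_cons]
    simp [ey, rhof_ab' G g hq hx hy hb1 hby]

end Pair2

lemma tau1_mem_segs : tau1 g ∈ segs G g := by
  simp [segs]

lemma mem_word (z : V) : z ∈ word G g := by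
  have h3 : ∀ c : Fin 3, c = 0 ∨ c = 1 ∨ c = 2 := by decide
  have hz : z ∈ tau1 g := by
    rcases h3 (g z) with h | h | h <;> simp [tau1, mem_cls, h]
  exact List.mem_flatten.2 ⟨tau1 g, tau1_mem_segs G g, hz⟩

end Stmt7Aux

section Glue

open Stmt7Aux

lemma alternate_comm' {V : Type*} [DecidableEq V] {W : List V} {x y : V} :
    Alternate W x y ↔ Alternate W y x := by
  unfold Alternate
  have h : W.filter (fun z => decide (z = x ∨ z = y)) =
      W.filter (fun z => decide (z = y ∨ z = x)) :=
    List.filter_congr (fun a _ => decide_eq_decide.2 or_comm)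
  rw [h]

lemma transgen_lt' {V : Type*} (G : SimpleGraph V) (C : G.Coloring (Fin 3)) {a b : V}
    (h : Relation.TransGen (fun x y => G.Adj x y ∧ C x < C y) a b) : C a < C b := by
  induction h with
  | single h => exact h.2
  | tail _ h ih => exact ih.trans h.2

lemma semi_adj {V : Type*} (G : SimpleGraph V) (C : G.Coloring (Fin 3)) :
    ∀ (k : ℕ) (v : Fin (k + 1) → V),
      (∀ i : Fin k, G.Adj (v i.castSucc) (v i.succ) ∧ C (v i.castSucc) < C (v i.succ)) →
      (G.Adj (v 0) (v (Fin.last k)) ∧ C (v 0) < C (v (Fin.last k))) →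
      ∀ i j : Fin (k + 1), i < j → G.Adj (v i) (v j)
  | 0, v, harcs, hlong, i, j, hij => by
      have h1 := i.isLt; have h2 := j.isLt; have h3 := Fin.lt_def.1 hij
      exact absurd h3 (by omega)
  | 1, v, harcs, hlong, i, j, hij => by
      have h1 := i.isLt; have h2 := j.isLt; have h3 := Fin.lt_def.1 hij
      have hi : i = ⟨0, by omega⟩ := Fin.ext (show (i : ℕ) = 0 by omega)
      have hj : j = ⟨1, by omega⟩ := Fin.ext (show (j : ℕ) = 1 by omega)
      rw [hi, hj]
      simpa using (harcs ⟨0, by omega⟩).1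
  | 2, v, harcs, hlong, i, j, hij => by
      have h1 := i.isLt; have h2 := j.isLt; have h3 := Fin.lt_def.1 hij
      rcases (by omega : ((i : ℕ) = 0 ∧ (j : ℕ) = 1) ∨ ((i : ℕ) = 1 ∧ (j : ℕ) = 2) ∨
          ((i : ℕ) = 0 ∧ (j : ℕ) = 2)) with ⟨hi, hj⟩ | ⟨hi, hj⟩ | ⟨hi, hj⟩ <;>
        rw [show i = ⟨_, by omega⟩ from Fin.ext hi, show j = ⟨_, by omega⟩ from Fin.ext hj]
      · simpa using (harcs ⟨0, by omega⟩).1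
      · simpa using (harcs ⟨1, by omega⟩).1
      · simpa [Fin.last] using hlong.1
  | (k+3), v, harcs, hlong, i, j, hij => by
      exfalso
      have mono : StrictMono (fun t : Fin (k + 4) => C (v t)) :=
        Fin.strictMono_iff_lt_succ.2 (fun t => (harcs t).2)
      have h01 : C (v ⟨0, by omega⟩) < C (v ⟨1, by omega⟩) := mono (Fin.mk_lt_mk.2 (by omega))
      have h12 : C (v ⟨1, by omega⟩) < C (v ⟨2, by omega⟩) := mono (Fin.mk_lt_mk.2 (by omega))
      have h23 : C (v ⟨2, by omega⟩) < C (v ⟨3, by omega⟩) := mono (Fin.mk_lt_mk.2 (by omega))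
      have hb := (C (v ⟨3, by omega⟩)).isLt
      rw [Fin.lt_def] at h01 h12 h23
      omega

end Glue

/-- Every 3-colorable graph is word-representable: given a proper
3-coloring, orienting every edge from the lower color class to the higher one yields a
semi-transitive orientation. -/
theorem stmt_7 {V : Type*} [Fintype V] [DecidableEq V] (G : SimpleGraph V)
    (C : G.Coloring (Fin 3)) :
    (IsOrientation G (fun x y => G.Adj x y ∧ C x < C y) ∧
      SemiTransitive (fun x y => G.Adj x y ∧ C x < C y)) ∧
    WordRepresentable G := by
  open Stmt7Aux in
  refine ⟨⟨?_, ?_, ?_⟩, ?_⟩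
  · -- IsOrientation
    intro a b
    constructor
    · intro h
      rcases lt_or_gt_of_ne (C.valid h) with hlt | hgt
      · exact Or.inl ⟨h, hlt⟩
      · exact Or.inr ⟨h.symm, hgt⟩
    · rintro (⟨h, -⟩ | ⟨h, -⟩)
      · exact h
      · exact h.symm
  · -- Acyclic
    intro a ha
    exact lt_irrefl _ (transgen_lt' G C ha)
  · -- semi-transitivity
    intro k v harcs hlong i j hij
    have mono : StrictMono (fun t : Fin (k + 1) => C (v t)) :=
      Fin.strictMono_iff_lt_succ.2 (fun t => (harcs t).2)
    exact ⟨semi_adj G C k v harcs hlong i j hij, mono hij⟩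
  · -- WordRepresentable
    refine ⟨word G ⇑C, mem_word G ⇑C, ?_⟩
    intro x y hxy
    have hc3 : ∀ c : Fin 3, c = 0 ∨ c = 1 ∨ c = 2 := by decide
    have hq : ∀ z : V, (fun z => decide (z = x ∨ z = y)) z = true ↔ (z = x ∨ z = y) :=
      fun z => by simp
    have hq' : ∀ z : V, (fun z => decide (z = y ∨ z = x)) z = true ↔ (z = y ∨ z = x) :=
      fun z => by simp
    rcases hc3 (C x) with hx | hx | hx <;> rcases hc3 (C y) with hy | hy | hy
    · -- (0,0)
      exact iff_of_false (fun h => C.valid h (hx.trans hy.symm))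
        (fun h => neg_same0 G ⇑C hq hx hy h)
    · -- (0,1)
      constructor
      · intro h
        exact chain_ab G ⇑C hq hx hy h
      · intro h
        by_contra hn
        exact neg_ab G ⇑C hq hx hy hn h
    · -- (0,2)
      rw [G.adj_comm, alternate_comm']
      constructor
      · intro h
        exact chain_d G ⇑C hq' hy (Or.inl hx) h
      · intro h
        by_contra hn
        exact neg_kill G ⇑C hq' hy hn h
    · -- (1,0)
      rw [G.adj_comm, alternate_comm']
      constructor
      · intro h
        exact chain_ab G ⇑C hq' hy hx h
      · intro h
        by_contra hn
        exact neg_ab G ⇑C hq' hy hx hn h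
    · -- (1,1)
      exact iff_of_false (fun h => C.valid h (hx.trans hy.symm))
        (fun h => neg_same1 G ⇑C hq hx hy h)
    · -- (1,2)
      rw [G.adj_comm, alternate_comm']
      constructor
      · intro h
        exact chain_d G ⇑C hq' hy (Or.inr hx) h
      · intro h
        by_contra hn
        exact neg_kill G ⇑C hq' hy hn h
    · -- (2,0)
      constructor
      · intro h
        exact chain_d G ⇑C hq hx (Or.inl hy) h
      · intro h
        by_contra hn
        exact neg_kill G ⇑C hq hx hn h
    · -- (2,1)
      constructor
      · intro h
        exact chain_d G ⇑C hq hx (Or.inr hy) h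
      · intro h
        by_contra hn
        exact neg_kill G ⇑C hq hx hn h
    · -- (2,2)
      exact iff_of_false (fun h => C.valid h (hx.trans hy.symm))
        (fun h => neg_kill G ⇑C hq hx (fun hadj => C.valid hadj (hx.trans hy.symm)) h)
end

section
/- Let G be a graph whose girth is strictly greater than its chromatic number. Then G admits a semi-transitive orientation (hence is word-representable): orienting each edge from smaller to larger color in an optimal proper coloring gives a semi-transitive orientation. -/
variable {V : Type*}

set_option linter.unusedSectionVars false


namespace Stmt8Aux

open List Relation

variable {V : Type*} [DecidableEq V]

/-- the two-letter filter predicate, as it appears (up to defeq) in `Alternate`. -/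
def prd (x y : V) : V → Bool := fun z => decide (z = x ∨ z = y)

lemma prd_comm (x y : V) : prd x y = prd y x := by
  funext z; simp [prd, or_comm]

/-- alternating list x y x y ... of length 2k -/
def altL (x y : V) : ℕ → List V
  | 0 => []
  | k + 1 => x :: y :: altL x y k

lemma altL_append (x y : V) : ∀ a b, altL x y a ++ altL x y b = altL x y (a + b)
  | 0, b => by simp [altL]
  | a + 1, b => by simp [altL, altL_append x y a b, Nat.succ_add]

lemma altL_chain {x y : V} (h : x ≠ y) : ∀ k, List.Chain' (· ≠ ·) (altL x y k)
  | 0 => by simp [altL, List.Chain']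
  | k + 1 => by
    rw [altL]; simp only [List.Chain']; rw [List.isChain_cons, List.isChain_cons]
    refine ⟨?_, ?_, altL_chain h k⟩
    · intro c hc
      simp only [List.head?_cons, Option.mem_def, Option.some.injEq] at hc
      exact hc ▸ h
    · intro c hc
      cases k with
      | zero => simp [altL] at hc
      | succ k =>
        simp only [altL, List.head?_cons, Option.mem_def, Option.some.injEq] at hc
        exact hc ▸ h.symm

lemma nodup_two {x y : V} (hxy : x ≠ y) :
    ∀ (f : List V), f.Nodup → (∀ z ∈ f, z = x ∨ z = y) → x ∈ f → y ∈ f →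
      f = [x, y] ∨ f = [y, x]
  | [], _, _, hx, _ => by cases hx
  | [a], _, hm, hx, hy => by
    simp at hx hy; subst hx; exact absurd hy.symm hxy
  | a :: b :: t, hnd, hm, hx, hy => by
    obtain ⟨ha1, hnd2⟩ := List.nodup_cons.mp hnd
    obtain ⟨hb1, -⟩ := List.nodup_cons.mp hnd2
    have hab : a ≠ b := fun e => ha1 (e ▸ List.mem_cons_self)
    have ha := hm a (by simp)
    have hb := hm b (by simp)
    have key : ∀ c, c = x ∨ c = y → c = a ∨ c = b := by
      intro c hcxy
      rcases ha with rfl | rfl <;> rcases hb with rfl | rfl <;>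
        first
          | exact absurd rfl hab
          | tauto
    have ht : t = [] := by
      rw [List.eq_nil_iff_forall_not_mem]
      intro c hc
      rcases key c (hm c (by simp [hc])) with rfl | rfl
      · exact ha1 (List.mem_cons_of_mem _ hc)
      · exact hb1 hc
    subst ht
    rcases ha with rfl | rfl <;> rcases hb with rfl | rfl
    · exact absurd rfl hab
    · left; rfl
    · right; rfl
    · exact absurd rfl hab

lemma filter_eq_singleton {l : List V} {q : V → Bool} {a : V}
    (hnd : l.Nodup) (ha : a ∈ l) (hq : ∀ z ∈ l, q z = true ↔ z = a) :
    l.filter q = [a] := by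
  have h1 : ∀ z ∈ l.filter q, z = a := by
    intro z hz
    rw [List.mem_filter] at hz
    exact (hq z hz.1).1 hz.2
  have h2 : a ∈ l.filter q := List.mem_filter.2 ⟨ha, (hq a ha).2 rfl⟩
  have h3 : (l.filter q).Nodup := hnd.filter q
  have h4 := List.eq_replicate_of_mem h1
  have h5 : (l.filter q).length ≤ 1 := by
    rw [h4] at h3
    exact List.nodup_replicate.mp h3
  have h6 : 0 < (l.filter q).length := List.length_pos_iff.2 (List.ne_nil_of_mem h2)
  have h7 : (l.filter q).length = 1 := le_antisymm h5 h6
  rw [h4, h7]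
  rfl


section Sorted

variable {n : ℕ} {C : V → Fin n}

open Classical in
/-- restriction of a list to a set -/
noncomputable def LS (L : List V) (S : Set V) : List V :=
  L.filter (fun z => decide (z ∈ S))

variable {L : List V}

lemma L_pair (hnd : L.Nodup) (hsort : L.Pairwise (fun a b => C a ≤ C b))
    {x y : V} (hx : x ∈ L) (hy : y ∈ L) (hlt : C x < C y) :
    L.filter (prd x y) = [x, y] := by
  have hxy : x ≠ y := fun e => absurd (e ▸ hlt) (lt_irrefl _)
  have h1 : (L.filter (prd x y)).Nodup := hnd.filter _
  have h2 : ∀ z ∈ L.filter (prd x y), z = x ∨ z = y := by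
    intro z hz
    rw [List.mem_filter] at hz
    have := hz.2
    simpa [prd] using this
  have h3 : x ∈ L.filter (prd x y) := List.mem_filter.2 ⟨hx, by simp [prd]⟩
  have h4 : y ∈ L.filter (prd x y) := List.mem_filter.2 ⟨hy, by simp [prd]⟩
  rcases nodup_two hxy _ h1 h2 h3 h4 with h | h
  · exact h
  · exfalso
    have hp : (L.filter (prd x y)).Pairwise (fun a b => C a ≤ C b) :=
      hsort.sublist (List.filter_sublist (l := L))
    rw [h] at hp
    have : C y ≤ C x := List.rel_of_pairwise_cons hp (by simp)
    exact absurd hlt (not_lt.mpr this)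

lemma pat_both (S : Set V) {x y : V} (hx : x ∈ S) (hy : y ∈ S) :
    (LS L S).filter (prd x y) = L.filter (prd x y) := by
  classical
  rw [LS, List.filter_filter]
  apply List.filter_congr
  intro z _
  by_cases hz : z = x ∨ z = y
  · have hzS : z ∈ S := by rcases hz with rfl | rfl <;> assumption
    simp [prd, hz, hzS]
  · simp [prd, hz]

lemma pat_one (hnd : L.Nodup) (S : Set V) {a b : V} (hmem : a ∈ L)
    (ha : a ∈ S) (hb : b ∉ S) (hab : a ≠ b) :
    (LS L S).filter (prd a b) = [a] := by
  classical
  rw [LS, List.filter_filter]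
  apply filter_eq_singleton hnd hmem
  intro z _
  simp only [prd, Bool.and_eq_true, decide_eq_true_eq]
  constructor
  · rintro ⟨rfl | rfl, hzS⟩
    · rfl
    · exact absurd hzS hb
  · rintro rfl
    exact ⟨Or.inl rfl, ha⟩

lemma pat_none (S : Set V) {x y : V} (hx : x ∉ S) (hy : y ∉ S) :
    (LS L S).filter (prd x y) = [] := by
  classical
  rw [LS, List.filter_filter]
  rw [List.filter_eq_nil_iff]
  intro z _
  simp only [prd, Bool.and_eq_true, decide_eq_true_eq, not_and]
  rintro (rfl | rfl) <;> assumption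

lemma pat_one' (hnd : L.Nodup) (S : Set V) {a b : V} (hmem : b ∈ L)
    (hb : b ∈ S) (ha : a ∉ S) (hab : a ≠ b) :
    (LS L S).filter (prd a b) = [b] := by
  rw [prd_comm]
  exact pat_one hnd S hmem hb ha hab.symm

end Sorted

section Graph

variable (G : SimpleGraph V) {n : ℕ} (C : V → Fin n)

def Erel : V → V → Prop := fun a b => G.Adj a b ∧ C a < C b

variable {G C}

lemma erel_tlt {a b : V} (h : TransGen (Erel G C) a b) : C a < C b := by
  induction h with
  | single h => exact h.2
  | tail _ h ih => exact ih.trans h.2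

lemma erel_notrans {a : V} (h : TransGen (Erel G C) a a) : False :=
  lt_irrefl _ (erel_tlt h)

lemma erel_ne {a b : V} (h : TransGen (Erel G C) a b) : a ≠ b :=
  fun e => erel_notrans (e ▸ h)

lemma erel_step {u w : V} (hu : TransGen (Erel G C) u w) (hnadj : ¬ G.Adj u w) :
    ∃ z, Erel G C u z ∧ TransGen (Erel G C) z w := by
  rcases ReflTransGen.cases_head hu.to_reflTransGen with h | ⟨z, hz1, hz2⟩
  · exact absurd h (erel_ne hu)
  · rcases reflTransGen_iff_eq_or_transGen.mp hz2 with rfl | ht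
    · exact absurd hz1.1 hnadj
    · exact ⟨z, hz1, ht⟩

variable (G C) in
def dSet (u : V) : Set V := {z | ReflTransGen (Erel G C) z u}

variable (G C) in
def uSet (w : V) : Set V := {z | ReflTransGen (Erel G C) w z}

variable (G C) in
def mSet (u w : V) : Set V := {z | z ∉ dSet G C u ∧ z ∉ uSet G C w}

lemma dSet_down {u a b : V} (h : Erel G C a b) (hb : b ∈ dSet G C u) :
    a ∈ dSet G C u := ReflTransGen.head h hb

lemma uSet_up {w a b : V} (h : Erel G C a b) (ha : a ∈ uSet G C w) :
    b ∈ uSet G C w := ha.tail h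

lemma d_u_disj {u w a : V} (hu : TransGen (Erel G C) u w) (h1 : a ∈ dSet G C u)
    (h2 : a ∈ uSet G C w) : False :=
  erel_notrans (hu.trans_left (ReflTransGen.trans h2 h1))

lemma mem_dSet_self (u : V) : u ∈ dSet G C u := ReflTransGen.refl
lemma mem_uSet_self (w : V) : w ∈ uSet G C w := ReflTransGen.refl

lemma noQR (hkey : ∀ ⦃x y z : V⦄, G.Adj x y → Erel G C x z → TransGen (Erel G C) z y → False)
    {u w x y : V} (hu : TransGen (Erel G C) u w) (hnadj : ¬ G.Adj u w)
    (hxu : x ∈ dSet G C u) (hyw : y ∈ uSet G C w) (hxy : Erel G C x y) : False := by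
  by_cases hx : x = u
  · subst hx
    obtain ⟨z, hz1, hz2⟩ := erel_step hu hnadj
    exact hkey hxy.1 hz1 (hz2.trans_left hyw)
  · rcases ReflTransGen.cases_head hxu with h | ⟨a, ha1, ha2⟩
    · exact hx h
    · exact hkey hxy.1 ha1 (TransGen.trans_right ha2 (hu.trans_left hyw))

variable (G C) in
noncomputable def cblock (u w : V) (L : List V) : List V :=
  LS L (dSet G C u) ++ LS L (mSet G C u w) ++ LS L (dSet G C u) ++
    LS L (uSet G C w) ++ LS L (mSet G C u w) ++ LS L (uSet G C w)

variable (G C) in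
noncomputable def iblock (u w : V) (L : List V) : List V :=
  (LS L (dSet G C u) ++ LS L (dSet G C u)ᶜ) ++ (LS L (dSet G C w) ++ LS L (dSet G C w)ᶜ)

open Classical in
variable (G C) in
noncomputable def blockOf (L : List V) (q : V × V) : List V :=
  if q.1 ≠ q.2 ∧ ¬ G.Adj q.1 q.2 then
    if TransGen (Erel G C) q.1 q.2 then cblock G C q.1 q.2 L
    else if TransGen (Erel G C) q.2 q.1 then cblock G C q.2 q.1 L
    else iblock G C q.1 q.2 L
  else []

variable {L : List V}

lemma cblock_edge
    (hkey : ∀ ⦃x y z : V⦄, G.Adj x y → Erel G C x z → TransGen (Erel G C) z y → False)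
    (hnd : L.Nodup) (hmem : ∀ z : V, z ∈ L)
    (hsort : L.Pairwise (fun a b => C a ≤ C b))
    {u w x y : V} (hu : TransGen (Erel G C) u w) (hnadj : ¬ G.Adj u w)
    (hxy : Erel G C x y) :
    (cblock G C u w L).filter (prd x y) = [x, y, x, y] := by
  have hne : x ≠ y := fun e => absurd (e ▸ hxy.2) (lt_irrefl _)
  have hLp : L.filter (prd x y) = [x, y] :=
    L_pair hnd hsort (hmem x) (hmem y) hxy.2
  simp only [cblock, List.filter_append, List.append_assoc]
  by_cases hyQ : y ∈ dSet G C u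
  · have hxQ : x ∈ dSet G C u := dSet_down hxy hyQ
    have hxR : x ∉ uSet G C w := fun h => d_u_disj hu hxQ h
    have hyR : y ∉ uSet G C w := fun h => d_u_disj hu hyQ h
    have hxM : x ∉ mSet G C u w := fun h => h.1 hxQ
    have hyM : y ∉ mSet G C u w := fun h => h.1 hyQ
    rw [pat_both (dSet G C u) hxQ hyQ, hLp, pat_none (mSet G C u w) hxM hyM, pat_none (uSet G C w) hxR hyR]
    rfl
  · by_cases hyR : y ∈ uSet G C w
    · by_cases hxQ : x ∈ dSet G C u
      · exact absurd (noQR hkey hu hnadj hxQ hyR hxy) (fun h => h)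
      · by_cases hxR : x ∈ uSet G C w
        · have hxM : x ∉ mSet G C u w := fun h => h.2 hxR
          have hyM : y ∉ mSet G C u w := fun h => h.2 hyR
          rw [pat_none (dSet G C u) hxQ hyQ, pat_none (mSet G C u w) hxM hyM, pat_both (uSet G C w) hxR hyR, hLp]
          rfl
        · have hxM : x ∈ mSet G C u w := ⟨hxQ, hxR⟩
          have hyM : y ∉ mSet G C u w := fun h => h.2 hyR
          rw [pat_none (dSet G C u) hxQ hyQ, pat_one hnd (mSet G C u w) (hmem x) hxM hyM hne,
            pat_one' hnd (uSet G C w) (hmem y) hyR hxR hne]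
          rfl
    · have hyM : y ∈ mSet G C u w := ⟨hyQ, hyR⟩
      by_cases hxR : x ∈ uSet G C w
      · exact absurd (uSet_up hxy hxR) hyR
      · by_cases hxQ : x ∈ dSet G C u
        · have hxM : x ∉ mSet G C u w := fun h => h.1 hxQ
          rw [pat_one hnd (dSet G C u) (hmem x) hxQ hyQ hne, pat_one' hnd (mSet G C u w) (hmem y) hyM hxM hne,
            pat_none (uSet G C w) hxR hyR]
          rfl
        · have hxM : x ∈ mSet G C u w := ⟨hxQ, hxR⟩
          rw [pat_none (dSet G C u) hxQ hyQ, pat_both (mSet G C u w) hxM hyM, hLp, pat_none (uSet G C w) hxR hyR]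
          rfl

lemma cblock_pair (hnd : L.Nodup) (hmem : ∀ z : V, z ∈ L)
    {u w : V} (hu : TransGen (Erel G C) u w) :
    (cblock G C u w L).filter (prd u w) = [u, u, w, w] := by
  have hne : u ≠ w := erel_ne hu
  have huQ : u ∈ dSet G C u := mem_dSet_self u
  have hwR : w ∈ uSet G C w := mem_uSet_self w
  have hwQ : w ∉ dSet G C u := fun h => erel_notrans (hu.trans_left h)
  have huR : u ∉ uSet G C w := fun h => erel_notrans (hu.trans_left h)
  have huM : u ∉ mSet G C u w := fun h => h.1 huQ
  have hwM : w ∉ mSet G C u w := fun h => h.2 hwR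
  simp only [cblock, List.filter_append, List.append_assoc]
  rw [pat_one hnd (dSet G C u) (hmem u) huQ hwQ hne, pat_none (mSet G C u w) huM hwM,
    pat_one' hnd (uSet G C w) (hmem w) hwR huR hne]
  rfl

lemma dpair_filter (hnd : L.Nodup) (hmem : ∀ z : V, z ∈ L)
    (hsort : L.Pairwise (fun a b => C a ≤ C b))
    {v' x y : V} (hxy : Erel G C x y) :
    ((LS L (dSet G C v') ++ LS L (dSet G C v')ᶜ).filter (prd x y)) = [x, y] := by
  have hne : x ≠ y := fun e => absurd (e ▸ hxy.2) (lt_irrefl _)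
  have hLp : L.filter (prd x y) = [x, y] :=
    L_pair hnd hsort (hmem x) (hmem y) hxy.2
  rw [List.filter_append]
  by_cases hyd : y ∈ dSet G C v'
  · have hxd : x ∈ dSet G C v' := dSet_down hxy hyd
    rw [pat_both (dSet G C v') hxd hyd, hLp, pat_none ((dSet G C v')ᶜ) (fun h => h hxd) (fun h => h hyd)]
    rfl
  · by_cases hxd : x ∈ dSet G C v'
    · rw [pat_one hnd (dSet G C v') (hmem x) hxd hyd hne,
        pat_one' hnd ((dSet G C v')ᶜ) (hmem y) hyd (fun h => h hxd) hne]
      rfl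
    · rw [pat_none (dSet G C v') hxd hyd, pat_both ((dSet G C v')ᶜ) hxd hyd, hLp]
      rfl

lemma iblock_edge (hnd : L.Nodup) (hmem : ∀ z : V, z ∈ L)
    (hsort : L.Pairwise (fun a b => C a ≤ C b))
    {u w x y : V} (hxy : Erel G C x y) :
    (iblock G C u w L).filter (prd x y) = [x, y, x, y] := by
  rw [iblock, List.filter_append, dpair_filter hnd hmem hsort hxy,
    dpair_filter hnd hmem hsort hxy]
  rfl

lemma not_mem_dSet {a b : V} (h1 : ¬ TransGen (Erel G C) a b) (hne : a ≠ b) :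
    a ∉ dSet G C b := by
  intro h
  rcases reflTransGen_iff_eq_or_transGen.mp h with h' | h'
  · exact hne h'.symm
  · exact h1 h'

lemma iblock_pair (hnd : L.Nodup) (hmem : ∀ z : V, z ∈ L)
    {u w : V} (h1 : ¬ TransGen (Erel G C) u w) (h2 : ¬ TransGen (Erel G C) w u)
    (hne : u ≠ w) :
    (iblock G C u w L).filter (prd u w) = [u, w, w, u] := by
  have hwd : w ∉ dSet G C u := not_mem_dSet h2 hne.symm
  have hud : u ∉ dSet G C w := not_mem_dSet h1 hne
  rw [iblock, List.filter_append, List.filter_append, List.filter_append,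
    pat_one hnd (dSet G C u) (hmem u) (mem_dSet_self u) hwd hne,
    pat_one' hnd ((dSet G C u)ᶜ) (hmem w) hwd (fun h => h (mem_dSet_self u)) hne,
    pat_one' hnd (dSet G C w) (hmem w) (mem_dSet_self w) hud hne,
    pat_one hnd ((dSet G C w)ᶜ) (hmem u) hud (fun h => h (mem_dSet_self w)) hne]
  rfl

lemma blockOf_edge
    (hkey : ∀ ⦃x y z : V⦄, G.Adj x y → Erel G C x z → TransGen (Erel G C) z y → False)
    (hnd : L.Nodup) (hmem : ∀ z : V, z ∈ L)
    (hsort : L.Pairwise (fun a b => C a ≤ C b))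
    {x y : V} (hxy : Erel G C x y) (q : V × V) :
    ∃ k, (blockOf G C L q).filter (prd x y) = altL x y k := by
  rw [blockOf]
  split_ifs with h1 h2 h3
  · exact ⟨2, by rw [cblock_edge hkey hnd hmem hsort h2 h1.2 hxy]; rfl⟩
  · exact ⟨2, by rw [cblock_edge hkey hnd hmem hsort h3
      (fun ha => h1.2 ha.symm) hxy]; rfl⟩
  · exact ⟨2, by rw [iblock_edge hnd hmem hsort hxy]; rfl⟩
  · exact ⟨0, by simp [altL]⟩

lemma blockOf_pair (hnd : L.Nodup) (hmem : ∀ z : V, z ∈ L)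
    {x y : V} (hne : x ≠ y) (hnadj : ¬ G.Adj x y) :
    ¬ List.Chain' (· ≠ ·) ((blockOf G C L (x, y)).filter (prd x y)) := by
  rw [blockOf]
  rw [if_pos ⟨hne, hnadj⟩]
  split_ifs with h2 h3
  · rw [cblock_pair hnd hmem h2]
    simp [List.Chain']
  · rw [prd_comm, cblock_pair hnd hmem h3]
    simp [List.Chain']
  · rw [iblock_pair hnd hmem h2 h3 hne]
    simp [List.Chain']

end Graph

section Main

theorem word_of_key [Fintype V] (G : SimpleGraph V) {n : ℕ} (C : V → Fin n)
    (hvalid : ∀ {a b : V}, G.Adj a b → C a ≠ C b)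
    (hkey : ∀ ⦃x y z : V⦄, G.Adj x y → Erel G C x z → TransGen (Erel G C) z y → False) :
    WordRepresentable G := by
  classical
  set le : V → V → Bool := fun a b => decide (C a ≤ C b) with hle
  set L : List V := (Finset.univ.toList (α := V)).mergeSort le with hL
  have hperm : L ~ Finset.univ.toList := List.mergeSort_perm _ _
  have hnd : L.Nodup := hperm.nodup_iff.mpr (Finset.nodup_toList _)
  have hmem : ∀ z : V, z ∈ L := fun z => hperm.mem_iff.mpr (by simp)
  have htrans : ∀ a b c : V, le a b = true → le b c = true → le a c = true := by
    intro a b c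
    simp only [hle, decide_eq_true_eq]
    exact le_trans
  have htotal : ∀ a b : V, (le a b || le b a) = true := by
    intro a b
    simp only [hle, Bool.or_eq_true, decide_eq_true_eq]
    exact le_total _ _
  have hsort : L.Pairwise (fun a b => C a ≤ C b) := by
    have h := List.pairwise_mergeSort (le := le) htrans htotal (Finset.univ.toList (α := V))
    rw [← hL] at h
    exact h.imp (by intro a b hab; simpa [hle] using hab)
  set PL : List (V × V) := (Finset.univ : Finset (V × V)).toList with hPL
  set W : List V := L ++ (PL.map (blockOf G C L)).flatten with hW
  have haltdef : ∀ (M : List V) (x y : V),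
      Alternate M x y ↔ List.Chain' (· ≠ ·) (M.filter (prd x y)) := fun _ _ _ => Iff.rfl
  have hflat : ∀ (x y : V), Erel G C x y → ∀ qs : List (V × V),
      ∃ k, ((qs.map (blockOf G C L)).flatten).filter (prd x y) = altL x y k := by
    intro x y hxy qs
    induction qs with
    | nil => exact ⟨0, by simp [altL]⟩
    | cons q qs ih =>
      obtain ⟨k, hk⟩ := ih
      obtain ⟨k0, hk0⟩ := blockOf_edge hkey hnd hmem hsort hxy q
      refine ⟨k0 + k, ?_⟩
      rw [List.map_cons, List.flatten_cons, List.filter_append, hk0, hk, altL_append]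
  have hedge : ∀ x y : V, Erel G C x y → Alternate W x y := by
    intro x y hxy
    rw [haltdef]
    obtain ⟨k, hk⟩ := hflat x y hxy PL
    rw [hW, List.filter_append, hk, L_pair hnd hsort (hmem x) (hmem y) hxy.2]
    have h1 : [x, y] = altL x y 1 := rfl
    rw [h1, altL_append]
    exact altL_chain (fun e => absurd (e ▸ hxy.2) (lt_irrefl _)) _
  have hnonedge : ∀ x y : V, x ≠ y → ¬ G.Adj x y → ¬ Alternate W x y := by
    intro x y hne hnadj halt
    rw [haltdef] at halt
    have hq : (x, y) ∈ PL := by simp [hPL]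
    obtain ⟨s, t, hst⟩ := List.append_of_mem hq
    have hWeq : W.filter (prd x y) =
        (L.filter (prd x y) ++ ((s.map (blockOf G C L)).flatten).filter (prd x y)) ++
          (blockOf G C L (x, y)).filter (prd x y) ++
          ((t.map (blockOf G C L)).flatten).filter (prd x y) := by
      rw [hW, hst]
      simp [List.filter_append, List.map_append, List.flatten_append, List.append_assoc]
    have hinf : (blockOf G C L (x, y)).filter (prd x y) <:+: W.filter (prd x y) :=
      ⟨_, _, hWeq.symm⟩
    exact blockOf_pair hnd hmem hne hnadj (halt.infix hinf)
  refine ⟨W, fun x => by rw [hW]; exact List.mem_append_left _ (hmem x), ?_⟩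
  intro x y hne
  constructor
  · intro hadj
    rcases lt_or_gt_of_ne (hvalid hadj) with hlt | hlt
    · exact hedge x y ⟨hadj, hlt⟩
    · have h2 := hedge y x ⟨hadj.symm, hlt⟩
      rw [haltdef] at h2 ⊢
      rw [prd_comm]
      exact h2
  · intro halt
    by_contra hnadj
    exact hnonedge x y hne hnadj halt

end Main

section Key

lemma key_of_girth [Fintype V] (G : SimpleGraph V) {n : ℕ} (C : G.Coloring (Fin n))
    (hn : (n : ℕ∞) = G.chromaticNumber) (h : G.chromaticNumber < G.girth) :
    ∀ ⦃x y z : V⦄, G.Adj x y → Erel G ⇑C x z → TransGen (Erel G ⇑C) z y → False := by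
  intro x y z hadj hxz htg
  have hwalk : ∀ {a b : V}, TransGen (Erel G ⇑C) a b →
      ∃ p : G.Walk a b, 0 < p.length ∧ List.Chain' (fun s t => C s < C t) p.support := by
    intro a b htg'
    induction htg' using Relation.TransGen.head_induction_on with
    | single hab =>
      exact ⟨SimpleGraph.Walk.cons hab.1 SimpleGraph.Walk.nil, by simp,
        by simpa [List.Chain', List.isChain_pair] using hab.2⟩
    | head h' _ ihp =>
      obtain ⟨p, hp0, hpc⟩ := ihp
      refine ⟨SimpleGraph.Walk.cons h'.1 p, by simp, ?_⟩
      rw [SimpleGraph.Walk.support_cons]; simp only [List.Chain']; rw [List.isChain_cons]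
      refine ⟨fun c hc => ?_, hpc⟩
      rw [p.support_eq_cons] at hc
      simp only [List.head?_cons, Option.mem_def, Option.some.injEq] at hc
      exact hc ▸ h'.2
  obtain ⟨p, hp0, hpc⟩ := hwalk htg
  haveI : IsTrans V (fun s t : V => C s < C t) := ⟨fun _ _ _ => lt_trans⟩
  have hpw : List.Pairwise (fun s t => C s < C t) p.support :=
    List.isChain_iff_pairwise.mp hpc
  have hpw' : List.Pairwise (fun s t => C s < C t) (z :: p.support.tail) :=
    p.support_eq_cons ▸ hpw
  have hzall : ∀ a ∈ p.support.tail, C z < C a :=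
    fun a ha => List.rel_of_pairwise_cons hpw' ha
  have hxns : x ∉ p.support := by
    intro hx
    rw [p.support_eq_cons] at hx
    rcases List.mem_cons.mp hx with rfl | hx'
    · exact absurd hxz.2 (lt_irrefl _)
    · exact absurd (hxz.2.trans (hzall x hx')) (lt_irrefl _)
  have hpath : p.IsPath :=
    SimpleGraph.Walk.IsPath.mk'
      (hpw.imp (fun hab e => absurd (e ▸ hab) (lt_irrefl _)))
  have hp'path : (SimpleGraph.Walk.cons hxz.1 p).IsPath := hpath.cons hxns
  have hedge : s(y, x) ∉ (SimpleGraph.Walk.cons hxz.1 p).edges := by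
    rw [SimpleGraph.Walk.edges_cons]
    intro hmem
    rcases List.mem_cons.mp hmem with heq | hmem2
    · rw [Sym2.eq_iff] at heq
      rcases heq with ⟨h1, _⟩ | ⟨h1, _⟩
      · exact hadj.ne h1.symm
      · exact (erel_ne htg) h1.symm
    · exact hxns (p.snd_mem_support_of_mem_edges hmem2)
  have hcyc : (SimpleGraph.Walk.cons hadj.symm (SimpleGraph.Walk.cons hxz.1 p)).IsCycle :=
    (SimpleGraph.Walk.cons_isCycle_iff _ hadj.symm).mpr ⟨hp'path, hedge⟩
  have hchain' : List.Chain' (fun s t => C s < C t)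
      (SimpleGraph.Walk.cons hxz.1 p).support := by
    rw [SimpleGraph.Walk.support_cons]; simp only [List.Chain']; rw [List.isChain_cons]
    refine ⟨fun c hc => ?_, hpc⟩
    rw [p.support_eq_cons] at hc
    simp only [List.head?_cons, Option.mem_def, Option.some.injEq] at hc
    exact hc ▸ hxz.2
  have hnodupC : (((SimpleGraph.Walk.cons hxz.1 p).support).map C).Nodup := by
    haveI : IsTrans V (fun s t : V => C s < C t) := ⟨fun _ _ _ => lt_trans⟩
    have hpwm : List.Pairwise (fun s t : Fin n => s < t)
        (((SimpleGraph.Walk.cons hxz.1 p).support).map C) :=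
      List.pairwise_map.mpr (List.isChain_iff_pairwise.mp hchain')
    exact hpwm.imp (fun hab e => absurd (e ▸ hab) (lt_irrefl _))
  have hlen : p.length + 2 ≤ n := by
    have h1 := hnodupC.length_le_card
    have h2 : (((SimpleGraph.Walk.cons hxz.1 p).support).map C).length = p.length + 2 := by
      rw [List.length_map, SimpleGraph.Walk.length_support, SimpleGraph.Walk.length_cons]
    rw [h2, Fintype.card_fin] at h1
    exact h1
  have hglen : G.egirth ≤
      ((SimpleGraph.Walk.cons hadj.symm (SimpleGraph.Walk.cons hxz.1 p)).length : ℕ∞) :=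
    SimpleGraph.le_egirth.mp le_rfl y _ hcyc
  have hclen : (SimpleGraph.Walk.cons hadj.symm (SimpleGraph.Walk.cons hxz.1 p)).length
      = p.length + 2 := by
    rw [SimpleGraph.Walk.length_cons, SimpleGraph.Walk.length_cons]
  rw [hclen] at hglen
  have hne_top : G.egirth ≠ ⊤ :=
    fun htop => (ENat.coe_ne_top _) (top_le_iff.mp (htop ▸ hglen))
  have hgirth : (G.girth : ℕ∞) = G.egirth := by
    rw [SimpleGraph.girth]
    exact ENat.coe_toNat hne_top
  have hfin : (G.girth : ℕ∞) ≤ (n : ℕ∞) := by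
    rw [hgirth]
    exact hglen.trans (by exact_mod_cast hlen)
  rw [hn] at hfin
  exact absurd h (not_lt.mpr hfin)

end Key

end Stmt8Aux


/-- If the girth of `G` is strictly greater than its chromatic number,
then orienting each edge from smaller to larger color in an optimal proper coloring
gives a semi-transitive orientation, so `G` is word-representable. -/
theorem stmt_8 {V : Type*} [Fintype V] [DecidableEq V] (G : SimpleGraph V)
    (h : G.chromaticNumber < G.girth) :
    (∀ (n : ℕ) (C : G.Coloring (Fin n)), (n : ℕ∞) = G.chromaticNumber →
      IsOrientation G (fun x y => G.Adj x y ∧ C x < C y) ∧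
      SemiTransitive (fun x y => G.Adj x y ∧ C x < C y)) ∧
    WordRepresentable G := by
  open Stmt8Aux Relation in
  constructor
  · intro n C hn
    have hkey := Stmt8Aux.key_of_girth G C hn h
    constructor
    · intro x y
      constructor
      · intro hadj
        rcases lt_or_gt_of_ne (C.valid hadj) with hlt | hlt
        · exact Or.inl ⟨hadj, hlt⟩
        · exact Or.inr ⟨hadj.symm, hlt⟩
      · rintro (⟨ha, -⟩ | ⟨ha, -⟩)
        · exact ha
        · exact ha.symm
    · constructor
      · intro a ha
        exact Stmt8Aux.erel_notrans (G := G) (C := ⇑C) ha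
      · intro k v hpath harc i j hij
        rcases Nat.lt_or_ge k 2 with hk | hk
        · interval_cases k
          · have h1 := Fin.lt_def.mp hij
            have h2 := j.isLt
            omega
          · have hi : i = 0 := by
              have h1 := Fin.lt_def.mp hij
              have h2 := j.isLt
              rw [Fin.ext_iff]
              simp
              omega
            have hj : j = Fin.last 1 := by
              have h1 := Fin.lt_def.mp hij
              have h2 := j.isLt
              have h3 := i.val.zero_le
              rw [Fin.ext_iff]
              simp [Fin.last]
              omega
            rw [hi, hj]
            exact harc
        · exfalso
          have hz : (0 : Fin (k + 1)) = (⟨0, by omega⟩ : Fin (k + 1)) := by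
            rw [Fin.ext_iff]
            simp
          have hstep0 : Stmt8Aux.Erel G ⇑C (v 0) (v ⟨1, by omega⟩) := by
            rw [hz]
            exact hpath ⟨0, by omega⟩
          have htg : ∀ m : ℕ, 2 ≤ m → (hmk : m ≤ k) →
              TransGen (Stmt8Aux.Erel G ⇑C) (v ⟨1, by omega⟩) (v ⟨m, by omega⟩) := by
            intro m
            induction m with
            | zero => omega
            | succ m ih =>
              intro hm2 hmk
              rcases Nat.lt_or_ge m 2 with hm' | hm'
              · have hm1 : m = 1 := by omega
                subst hm1
                exact TransGen.single (hpath ⟨1, by omega⟩)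
              · exact TransGen.tail (ih hm' (by omega)) (hpath ⟨m, by omega⟩)
          have hlast : Fin.last k = (⟨k, by omega⟩ : Fin (k + 1)) := rfl
          refine hkey harc.1 hstep0 ?_
          rw [hlast]
          exact htg k hk le_rfl
  · have hcol := G.colorable_chromaticNumber_of_fintype
    have hn : ((G.chromaticNumber.toNat : ℕ) : ℕ∞) = G.chromaticNumber :=
      ENat.coe_toNat (ne_top_of_lt h)
    obtain ⟨C⟩ := hcol
    exact Stmt8Aux.word_of_key G ⇑C (fun hadj => C.valid hadj)
      (Stmt8Aux.key_of_girth G C hn h)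
end

section
/- If letters x0 and xt alternate in a word W and for every pair of consecutive indices i, xi and x(i+1) alternate in W with the first occurrence of xi preceding that of x(i+1) (for a sequence x0, x1, …, xt), and the first occurrence of x0 precedes that of xt, then for all 0 ≤ j < k ≤ t, the letters xj and xk alternate in W with xj's first occurrence preceding xk's. -/
variable {V : Type*}

section AuxStmt19

variable {V : Type*} [DecidableEq V]

private lemma head_filter_stmt19 {a b : V} : ∀ (W : List V), W.idxOf a < W.idxOf b →
    (W.filter (fun z => z = a ∨ z = b)).head? = some a
  | [], h => by simp [List.idxOf_nil] at h
  | w :: W, h => by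
    by_cases hwa : w = a
    · subst hwa; simp [List.filter_cons]
    · by_cases hwb : w = b
      · subst hwb
        rw [List.idxOf_cons_self] at h; omega
      · rw [List.idxOf_cons_ne _ hwa, List.idxOf_cons_ne _ hwb] at h
        have := head_filter_stmt19 (a := a) (b := b) W (by omega)
        simpa [List.filter_cons, hwa, hwb] using this

private lemma alt_count_stmt19 : ∀ (L : List V) (c d : V), c ≠ d →
    (∀ z ∈ L, z = c ∨ z = d) → L.Chain' (· ≠ ·) →
    (∀ z ∈ L.head?, z = c) → ∀ n : ℕ,
    (L.take n).count d ≤ (L.take n).count c ∧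
      (L.take n).count c ≤ (L.take n).count d + 1
  | [], c, d, _, _, _, _, n => by simp
  | w :: T, c, d, hcd, hmem, hch, hhd, n => by
    have hwc : w = c := hhd w rfl
    match n with
    | 0 => simp
    | n + 1 =>
      unfold List.Chain' at hch
      rw [List.isChain_cons] at hch
      have hT : ∀ z ∈ T, z = d ∨ z = c := by
        intro z hz
        exact Or.symm (hmem z (List.mem_cons_of_mem _ hz))
      have hhT : ∀ z ∈ T.head?, z = d := by
        intro z hz
        have h1 := hch.1 z hz
        rcases hT z (T.mem_of_mem_head? hz) with h | h
        · exact h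
        · exact absurd (hwc.trans h.symm) h1
      have IH := alt_count_stmt19 T d c hcd.symm hT hch.2 hhT n
      rw [List.take_succ_cons, List.count_cons, List.count_cons]
      subst hwc
      have e1 : ((w == w) = true) := by simp
      have e2 : ¬ ((w == d) = true) := by simpa using hcd
      rw [if_pos e1, if_neg e2]
      omega

private lemma exists_take_filter_stmt19 (p : V → Bool) :
    ∀ (W : List V) (m : ℕ), ∃ n, (W.take n).filter p = (W.filter p).take m
  | [], _ => ⟨0, by simp⟩
  | w :: W, m => by
    by_cases hw : p w
    · match m with
      | 0 => exact ⟨0, by simp⟩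
      | m + 1 =>
        obtain ⟨n, hn⟩ := exists_take_filter_stmt19 p W m
        exact ⟨n + 1, by simp [List.filter_cons, hw, hn]⟩
    · obtain ⟨n, hn⟩ := exists_take_filter_stmt19 p W m
      exact ⟨n + 1, by simp [List.filter_cons, hw, hn]⟩

private lemma alternate_counts_stmt19 {W : List V} {a b : V} (hab : a ≠ b)
    (halt : Alternate W a b) (hidx : W.idxOf a < W.idxOf b) :
    ∀ n, (W.take n).count b ≤ (W.take n).count a ∧
      (W.take n).count a ≤ (W.take n).count b + 1 := by
  intro n
  have hmemF : ∀ z ∈ W.filter (fun z => z = a ∨ z = b), z = a ∨ z = b := by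
    intro z hz
    have := (List.mem_filter.mp hz).2
    simpa using this
  have hhd : ∀ z ∈ (W.filter (fun z => z = a ∨ z = b)).head?, z = a := by
    have h := head_filter_stmt19 (a := a) (b := b) W hidx
    intro z hz; rw [h] at hz; simpa using hz.symm
  have key := alt_count_stmt19 (W.filter (fun z => z = a ∨ z = b)) a b hab hmemF halt hhd
  have hq := List.prefix_iff_eq_take.mp
    ((W.take_prefix n).filter (fun z => decide (z = a ∨ z = b)))
  have h2 := key ((W.take n).filter (fun z => z = a ∨ z = b)).length
  rw [← hq] at h2
  rwa [List.count_filter (by simp), List.count_filter (by simp)] at h2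

private lemma counts_alternate_stmt19 {W : List V} {a b : V} (hab : a ≠ b)
    (h : ∀ n, (W.take n).count b ≤ (W.take n).count a ∧
      (W.take n).count a ≤ (W.take n).count b + 1) :
    Alternate W a b := by
  unfold Alternate
  set F := W.filter (fun z => z = a ∨ z = b) with hF
  have hFc : ∀ m, (F.take m).count b ≤ (F.take m).count a ∧
      (F.take m).count a ≤ (F.take m).count b + 1 := by
    intro m
    obtain ⟨n, hn⟩ := exists_take_filter_stmt19 (fun z => decide (z = a ∨ z = b)) W m
    have h1 := h n
    rw [← List.count_filter (p := fun z => decide (z = a ∨ z = b)) (a := a) (by simp),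
      ← List.count_filter (p := fun z => decide (z = a ∨ z = b)) (a := b) (by simp)] at h1
    rwa [hn] at h1
  unfold List.Chain'
  rw [List.isChain_iff_getElem]
  intro i hi heq
  have h1 : i < F.length := by omega
  have h2 : i + 1 < F.length := by omega
  replace heq : F.get ⟨i, h1⟩ = F.get ⟨i + 1, h2⟩ := heq
  have e1 : F.take (i + 1) = F.take i ++ [F.get ⟨i, h1⟩] := by
    rw [List.take_succ, List.getElem?_eq_getElem h1]; simp
  have e2 : F.take (i + 2) = F.take (i + 1) ++ [F.get ⟨i + 1, h2⟩] := by
    rw [List.take_succ, List.getElem?_eq_getElem h2]; simp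
  have hg : F.get ⟨i, h1⟩ = a ∨ F.get ⟨i, h1⟩ = b := by
    have hmm : F.get ⟨i, h1⟩ ∈ F := List.get_mem F ⟨i, h1⟩
    have := (List.mem_filter.mp
      (show F.get ⟨i, h1⟩ ∈ W.filter (fun z => decide (z = a ∨ z = b)) from hmm)).2
    simpa using this
  have hc : ∀ c : V, (F.take (i + 2)).count c = (F.take i).count c
      + (if F.get ⟨i, h1⟩ = c then 1 else 0) + (if F.get ⟨i + 1, h2⟩ = c then 1 else 0) := by
    intro c
    rw [e2, e1, List.count_append, List.count_append]
    simp [List.count_singleton', beq_iff_eq]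
  have hca := hc a
  have hcb := hc b
  have hi0 := hFc i
  have hi2 := hFc (i + 2)
  rcases hg with hga | hgb
  · rw [hga, ← heq, hga] at hca hcb
    rw [if_pos rfl] at hca
    rw [if_neg hab] at hcb
    omega
  · rw [hgb, ← heq, hgb] at hca hcb
    rw [if_neg (Ne.symm hab)] at hca
    rw [if_pos rfl] at hcb
    omega

end AuxStmt19

/-- If `x 0` and `x t` alternate in `W`, consecutive letters `x i`,
`x (i+1)` alternate with the first occurrence of `x i` preceding that of `x (i+1)`,
and the first occurrence of `x 0` precedes that of `x t`, then all pairs `x j`, `x k`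
with `j < k ≤ t` alternate with `x j`'s first occurrence preceding `x k`'s. -/
theorem stmt_19 {V : Type*} [DecidableEq V] (W : List V) (t : ℕ) (x : ℕ → V)
    (hmem : ∀ i ≤ t, x i ∈ W)
    (hconsec : ∀ i < t, Alternate W (x i) (x (i + 1)) ∧
      W.idxOf (x i) < W.idxOf (x (i + 1)))
    (h0t : Alternate W (x 0) (x t))
    (hfirst : W.idxOf (x 0) < W.idxOf (x t)) :
    ∀ j k : ℕ, j < k → k ≤ t →
      Alternate W (x j) (x k) ∧ W.idxOf (x j) < W.idxOf (x k) := by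
  -- Strict monotonicity of first occurrences along the chain.
  have hidx : ∀ k j : ℕ, j < k → k ≤ t → W.idxOf (x j) < W.idxOf (x k) := by
    intro k
    induction k with
    | zero => intro j h _; omega
    | succ k ih =>
      intro j hjk hkt
      rcases Nat.lt_or_ge j k with h | h
      · exact lt_trans (ih j h (by omega)) (hconsec k (by omega)).2
      · have hj : j = k := by omega
        subst hj
        exact (hconsec j (by omega)).2
  have hne : ∀ j k : ℕ, j < k → k ≤ t → x j ≠ x k := by
    intro j k hjk hkt he
    have := hidx k j hjk hkt
    rw [he] at this
    omega
  -- Prefix-count monotonicity along the chain.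
  have hmono : ∀ k j : ℕ, j ≤ k → k ≤ t → ∀ n : ℕ,
      (W.take n).count (x k) ≤ (W.take n).count (x j) := by
    intro k
    induction k with
    | zero =>
      intro j hj _ n
      have : j = 0 := by omega
      subst this; exact le_refl _
    | succ k ih =>
      intro j hj hkt n
      have step := (alternate_counts_stmt19 (hne k (k + 1) (by omega) hkt)
        (hconsec k (by omega)).1 (hconsec k (by omega)).2 n).1
      rcases Nat.lt_or_ge j (k + 1) with h | h
      · exact le_trans step (ih j (by omega) (by omega) n)
      · have hj' : j = k + 1 := by omega
        subst hj'; exact le_refl _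
  intro j k hjk hkt
  have ht1 : 1 ≤ t := by omega
  have htop := alternate_counts_stmt19 (hne 0 t ht1 le_rfl) h0t hfirst
  refine ⟨counts_alternate_stmt19 (hne j k hjk hkt) ?_, hidx k j hjk hkt⟩
  intro n
  have h1 : (W.take n).count (x j) ≤ (W.take n).count (x 0) :=
    hmono j 0 (Nat.zero_le _) (by omega) n
  have h2 := (htop n).2
  have h3 : (W.take n).count (x t) ≤ (W.take n).count (x k) := hmono t k hkt le_rfl n
  have h4 := hmono k j (le_of_lt hjk) hkt n
  exact ⟨h4, by omega⟩
end
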